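/- arXiv:2211.00953 — 8 statements merged into one kernel-verified Lean document; each statement's English description precedes it below -/
import Mathlib

section
/- Let A be an N×N real symmetric positive definite matrix with eigenvalues λ₁,…,λ_N, b ∈ ℝ^N, x = A⁻¹b, x₀ ∈ ℝ^N with x₀ ≠ x, and r₀ = b − Ax₀. Then for every k, the minimum over z ∈ x₀ + K_k(A,r₀) of ‖x − z‖_A divided by ‖x − x₀‖_A is at most min over p ∈ P_k(0) of max over 1 ≤ i ≤ N of |p(λ_i)|. -/
open Matrix Polynomial

/-- The `A`-norm `‖v‖_A = (vᵀ A v)^{1/2}`. -/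
noncomputable def Anorm {N : ℕ} (A : Matrix (Fin N) (Fin N) ℝ) (v : Fin N → ℝ) : ℝ :=
  Real.sqrt (v ⬝ᵥ A *ᵥ v)

/-- The `k`-th Krylov subspace `K_k(A, r) = span {r, Ar, …, A^{k-1} r}`. -/
def krylov {N : ℕ} (A : Matrix (Fin N) (Fin N) ℝ) (r : Fin N → ℝ) (k : ℕ) :
    Submodule ℝ (Fin N → ℝ) :=
  Submodule.span ℝ {v | ∃ i < k, v = (A ^ i) *ᵥ r}

section Aux

variable {N : ℕ}

lemma sum_mulVec' {ι : Type*} (s : Finset ι) (f : ι → Matrix (Fin N) (Fin N) ℝ)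
    (r : Fin N → ℝ) : (∑ i ∈ s, f i) *ᵥ r = ∑ i ∈ s, f i *ᵥ r := by
  induction s using Finset.cons_induction with
  | empty => simp [Matrix.zero_mulVec]
  | cons a s ha ih => simp [Finset.sum_cons, Matrix.add_mulVec, ih]

variable (Q : Matrix (Fin N) (Fin N) ℝ)

/-- Conjugation of a diagonal matrix by `Q`. -/
noncomputable def conjD (d : Fin N → ℝ) : Matrix (Fin N) (Fin N) ℝ :=
  Q * Matrix.diagonal d * Qᵀ

lemma conjD_mul (hQ : Qᵀ * Q = 1) (d₁ d₂ : Fin N → ℝ) :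
    conjD Q d₁ * conjD Q d₂ = conjD Q (fun i => d₁ i * d₂ i) := by
  unfold conjD
  simp only [Matrix.mul_assoc]
  rw [← Matrix.mul_assoc Qᵀ Q, hQ, Matrix.one_mul,
    ← Matrix.mul_assoc (Matrix.diagonal d₁), diagonal_mul_diagonal]

lemma conjD_one (hQ : Qᵀ * Q = 1) : conjD Q 1 = 1 := by
  unfold conjD
  have h1 : Matrix.diagonal (1 : Fin N → ℝ) = 1 := Matrix.diagonal_one
  rw [h1, Matrix.mul_one, mul_eq_one_comm.mp hQ]

lemma conjD_pow (hQ : Qᵀ * Q = 1) (d : Fin N → ℝ) (n : ℕ) :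
    (conjD Q d) ^ n = conjD Q (fun i => d i ^ n) := by
  induction n with
  | zero => rw [pow_zero]; exact (conjD_one Q hQ).symm
  | succ n ih =>
      rw [pow_succ, ih, conjD_mul Q hQ]
      simp [pow_succ]

lemma conjD_smul (a : ℝ) (d : Fin N → ℝ) :
    a • conjD Q d = conjD Q (fun i => a * d i) := by
  unfold conjD
  have h : (fun i => a * d i) = a • d := rfl
  rw [h, Matrix.diagonal_smul, Matrix.mul_smul, Matrix.smul_mul]

lemma conjD_add (d₁ d₂ : Fin N → ℝ) :
    conjD Q d₁ + conjD Q d₂ = conjD Q (fun i => d₁ i + d₂ i) := by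
  unfold conjD
  rw [← Matrix.diagonal_add, Matrix.mul_add, Matrix.add_mul]

lemma aeval_conjD (hQ : Qᵀ * Q = 1) (lam : Fin N → ℝ) (p : Polynomial ℝ) :
    aeval (conjD Q lam) p = conjD Q (fun i => p.eval (lam i)) := by
  induction p using Polynomial.induction_on' with
  | add p q hp hq =>
      rw [map_add, hp, hq, conjD_add]
      simp
  | monomial n a =>
      rw [aeval_monomial, Algebra.algebraMap_eq_smul_one, smul_mul_assoc, one_mul,
        conjD_pow Q hQ, conjD_smul]
      simp [Polynomial.eval_monomial]

lemma quad3 (hQ : Qᵀ * Q = 1) (d₁ d₂ : Fin N → ℝ) (v : Fin N → ℝ) :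
    (conjD Q d₁ *ᵥ v) ⬝ᵥ (conjD Q d₂ *ᵥ v) =
      ∑ i, d₁ i * d₂ i * ((Qᵀ *ᵥ v) i) ^ 2 := by
  have h : ∀ d : Fin N → ℝ, conjD Q d *ᵥ v = Q *ᵥ (Matrix.diagonal d *ᵥ (Qᵀ *ᵥ v)) := by
    intro d
    unfold conjD
    rw [Matrix.mulVec_mulVec, Matrix.mulVec_mulVec, Matrix.mul_assoc]
  rw [h, h, Matrix.dotProduct_mulVec]
  have hv : (Q *ᵥ (Matrix.diagonal d₁ *ᵥ (Qᵀ *ᵥ v))) ᵥ* Q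
      = Matrix.diagonal d₁ *ᵥ (Qᵀ *ᵥ v) := by
    rw [← Matrix.mulVec_transpose, Matrix.mulVec_mulVec, hQ, Matrix.one_mulVec]
  rw [hv]
  simp only [dotProduct, Matrix.mulVec_diagonal]
  exact Finset.sum_congr rfl fun i _ => by ring

lemma quad1 (hQ : Qᵀ * Q = 1) (d : Fin N → ℝ) (v : Fin N → ℝ) :
    v ⬝ᵥ (conjD Q d *ᵥ v) = ∑ i, d i * ((Qᵀ *ᵥ v) i) ^ 2 := by
  have := quad3 Q hQ 1 d v
  rw [conjD_one Q hQ, Matrix.one_mulVec] at this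
  rw [this]
  simp

end Aux

theorem stmt_3 {N : ℕ} (A Q : Matrix (Fin N) (Fin N) ℝ) (lam : Fin N → ℝ)
    (hlam : ∀ i, 0 < lam i) (hQ : Qᵀ * Q = 1)
    (hAQ : A = Q * Matrix.diagonal lam * Qᵀ)
    (b x₀ x : Fin N → ℝ) (hx : x = A⁻¹ *ᵥ b) (hx₀ : x₀ ≠ x)
    (r₀ : Fin N → ℝ) (hr₀ : r₀ = b - A *ᵥ x₀) (k : ℕ) :
    sInf {t | ∃ z : Fin N → ℝ, (∃ v ∈ krylov A r₀ k, z = x₀ + v) ∧ t = Anorm A (x - z)} /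
        Anorm A (x - x₀) ≤
      sInf {t | ∃ p : Polynomial ℝ, p.natDegree ≤ k ∧ p.eval 0 = 1 ∧
        t = ⨆ i, |p.eval (lam i)|} := by
  -- N = 0 is impossible
  rcases Nat.eq_zero_or_pos N with hN | hN
  · subst hN; exact absurd (Subsingleton.elim x₀ x) hx₀
  haveI : Nonempty (Fin N) := ⟨⟨0, hN⟩⟩
  have hA : A = conjD Q lam := hAQ
  -- determinant
  have hdetQ : Qᵀ.det * Q.det = 1 := by rw [← Matrix.det_mul, hQ, Matrix.det_one]
  have hdetA : A.det = ∏ i, lam i := by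
    rw [hA]
    unfold conjD
    rw [Matrix.det_mul, Matrix.det_mul, Matrix.det_diagonal, Matrix.det_transpose]
    rw [Matrix.det_transpose] at hdetQ
    linear_combination (∏ i, lam i) * hdetQ
  have hdetA' : IsUnit A.det := by
    rw [hdetA]
    exact (Finset.prod_pos fun i _ => hlam i).ne'.isUnit
  have hAx : A *ᵥ x = b := by
    rw [hx, Matrix.mulVec_mulVec, Matrix.mul_nonsing_inv A hdetA', Matrix.one_mulVec]
  set e₀ : Fin N → ℝ := x - x₀ with he₀def
  have he₀ : e₀ ≠ 0 := sub_ne_zero.mpr (Ne.symm hx₀)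
  have hr : r₀ = A *ᵥ e₀ := by
    rw [hr₀, he₀def, Matrix.mulVec_sub, hAx]
  set w : Fin N → ℝ := Qᵀ *ᵥ e₀ with hwdef
  have hw : w ≠ 0 := by
    intro h
    apply he₀
    have : Q *ᵥ w = e₀ := by
      rw [hwdef, Matrix.mulVec_mulVec, mul_eq_one_comm.mp hQ, Matrix.one_mulVec]
    rw [← this, h, Matrix.mulVec_zero]
  have hS : e₀ ⬝ᵥ A *ᵥ e₀ = ∑ i, lam i * (w i) ^ 2 := by
    rw [hA]; exact quad1 Q hQ lam e₀
  have hSpos : 0 < ∑ i, lam i * (w i) ^ 2 := by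
    obtain ⟨j, hj⟩ := Function.ne_iff.mp hw
    refine Finset.sum_pos' (fun i _ => mul_nonneg (hlam i).le (sq_nonneg _))
      ⟨j, Finset.mem_univ j, ?_⟩
    exact mul_pos (hlam j) (pow_pos (abs_pos.mpr hj) 2 |>.trans_eq (by rw [sq_abs]))
  have hc : 0 < Anorm A e₀ := by
    unfold Anorm
    rw [hS]
    exact Real.sqrt_pos.mpr hSpos
  -- bddBelow of LHS inf set
  have hbdd : BddBelow {t | ∃ z : Fin N → ℝ,
      (∃ v ∈ krylov A r₀ k, z = x₀ + v) ∧ t = Anorm A (x - z)} := by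
    refine ⟨0, fun t ht => ?_⟩
    obtain ⟨z, _, rfl⟩ := ht
    exact Real.sqrt_nonneg _
  apply le_csInf
  · exact ⟨⨆ i, |(1 : Polynomial ℝ).eval (lam i)|, 1, by simp, by simp, rfl⟩
  rintro t ⟨p, hdeg, hp0, rfl⟩
  set M := ⨆ i, |p.eval (lam i)| with hMdef
  have hM_ge : ∀ i, |p.eval (lam i)| ≤ M :=
    fun i => le_ciSup (f := fun i => |p.eval (lam i)|)
      (Set.Finite.bddAbove (Set.finite_range _)) i
  have hM0 : 0 ≤ M := le_trans (abs_nonneg _) (hM_ge (Classical.arbitrary _))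
  -- factor p = 1 - X * q
  set q : Polynomial ℝ := (1 - p) /ₘ X with hqdef
  have hfact : 1 - p = X * q := by
    have h1 := Polynomial.modByMonic_add_div (1 - p) (X : Polynomial ℝ)
    rw [Polynomial.modByMonic_X] at h1
    have : (1 - p).eval 0 = 0 := by simp [hp0]
    rw [this, map_zero, zero_add] at h1
    exact h1.symm
  set v : Fin N → ℝ := aeval A q *ᵥ r₀ with hvdef
  have hv : v ∈ krylov A r₀ k := by
    by_cases hq0 : q = 0
    · rw [hvdef, hq0, map_zero, Matrix.zero_mulVec]
      exact Submodule.zero_mem _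
    have hdq : q.natDegree + 1 ≤ k := by
      have h1 : (X * q).natDegree = 1 + q.natDegree := by
        rw [Polynomial.natDegree_mul Polynomial.X_ne_zero hq0, Polynomial.natDegree_X]
      have h2 : (1 - p).natDegree ≤ k := by
        refine le_trans (Polynomial.natDegree_sub_le _ _) ?_
        simp [Polynomial.natDegree_one]
        exact hdeg
      rw [hfact, h1] at h2
      omega
    rw [hvdef, Polynomial.aeval_eq_sum_range, sum_mulVec']
    refine Submodule.sum_mem _ fun i hi => ?_
    rw [Matrix.smul_mulVec]
    refine Submodule.smul_mem _ _ (Submodule.subset_span ?_)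
    refine ⟨i, ?_, rfl⟩
    simp only [Finset.mem_range] at hi
    omega
  -- key identity
  have hxz : x - (x₀ + v) = aeval A p *ᵥ e₀ := by
    have hpq : p = 1 - X * q := by rw [← hfact]; ring
    rw [hpq, map_sub, _root_.map_mul, aeval_X, _root_.map_one, Matrix.sub_mulVec, Matrix.one_mulVec]
    have hcomm : A * aeval A q = aeval A q * A := by
      have h1 : aeval A (X * q) = A * aeval A q := by rw [_root_.map_mul, aeval_X]
      have h2 : aeval A (q * X) = aeval A q * A := by rw [_root_.map_mul, aeval_X]
      rw [← h1, ← h2, mul_comm]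
    rw [hcomm, ← Matrix.mulVec_mulVec, ← hr, ← hvdef]
    rw [he₀def]
    abel
  -- norm bound
  have hinner : (aeval A p *ᵥ e₀) ⬝ᵥ A *ᵥ (aeval A p *ᵥ e₀)
      = ∑ i, (p.eval (lam i)) * (lam i * p.eval (lam i)) * (w i) ^ 2 := by
    have hP : aeval A p = conjD Q (fun i => p.eval (lam i)) := by
      rw [hA]; exact aeval_conjD Q hQ lam p
    have h2 : A *ᵥ (aeval A p *ᵥ e₀) = conjD Q (fun i => lam i * p.eval (lam i)) *ᵥ e₀ := by
      rw [hP, hA, Matrix.mulVec_mulVec, conjD_mul Q hQ]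
    rw [h2, hP]
    exact quad3 Q hQ _ _ e₀
  have hboundsum : ∑ i, (p.eval (lam i)) * (lam i * p.eval (lam i)) * (w i) ^ 2
      ≤ M ^ 2 * ∑ i, lam i * (w i) ^ 2 := by
    rw [Finset.mul_sum]
    refine Finset.sum_le_sum fun i _ => ?_
    have h1 : |p.eval (lam i)| ≤ M := hM_ge i
    have h2 : (p.eval (lam i)) ^ 2 ≤ M ^ 2 := by
      rw [← sq_abs]
      exact pow_le_pow_left₀ (abs_nonneg _) h1 2
    have h3 := (hlam i).le
    nlinarith [mul_nonneg (mul_nonneg (sub_nonneg.mpr h2) h3) (sq_nonneg (w i))]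
  have hbound : Anorm A (x - (x₀ + v)) ≤ M * Anorm A e₀ := by
    rw [hxz]
    unfold Anorm
    rw [hS]
    calc Real.sqrt ((aeval A p *ᵥ e₀) ⬝ᵥ A *ᵥ (aeval A p *ᵥ e₀))
        ≤ Real.sqrt (M ^ 2 * ∑ i, lam i * (w i) ^ 2) := by
          rw [hinner]; exact Real.sqrt_le_sqrt hboundsum
      _ = M * Real.sqrt (∑ i, lam i * (w i) ^ 2) := by
          rw [Real.sqrt_mul (sq_nonneg M), Real.sqrt_sq hM0]
  -- conclude
  rw [div_le_iff₀ hc]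
  calc sInf {t | ∃ z : Fin N → ℝ, (∃ v ∈ krylov A r₀ k, z = x₀ + v) ∧ t = Anorm A (x - z)}
      ≤ Anorm A (x - (x₀ + v)) := csInf_le hbdd ⟨x₀ + v, ⟨v, hv, rfl⟩, rfl⟩
    _ ≤ M * Anorm A e₀ := hbound
end

section
/- (Greenbaum, 1979) Let A be an N×N real symmetric positive definite matrix with eigenvalues λ₁,…,λ_N, and let d(A) be the degree of the minimal polynomial of A. Then for every step k ≤ d(A) there exists a nonzero initial residual r₀ ∈ ℝ^N (equivalently, vectors b and x₀ with r₀ = b − Ax₀ and x₀ ≠ A⁻¹b) such that the minimum over z ∈ x₀ + K_k(A,r₀) of ‖A⁻¹b − z‖_A equals ‖A⁻¹b − x₀‖_A times the min over p ∈ P_k(0) of max over 1 ≤ i ≤ N of |p(λ_i)|; i.e., the worst-case bound for CG given by the polynomial min-max problem on the spectrum is attained. -/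
open Matrix Polynomial Finset
namespace Stmt4



noncomputable def g (T : Finset ℝ) (t : ℝ) : ℝ := Polynomial.eval 0 (Lagrange.basis T id t)

noncomputable def Ls (T : Finset ℝ) : ℝ := ∑ t ∈ T, |g T t|

lemma g_eq (T : Finset ℝ) (t : ℝ) :
    g T t = ∏ s ∈ T.erase t, (0 - s) / (t - s) := by
  simp only [g, Lagrange.basis, Polynomial.eval_prod, Lagrange.basisDivisor]
  refine Finset.prod_congr rfl fun s _ => ?_
  simp [div_eq_mul_inv, mul_comm]

lemma lagrange_identity (T : Finset ℝ) (p : Polynomial ℝ) (h : p.degree < T.card) :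
    p.eval 0 = ∑ t ∈ T, p.eval t * g T t := by
  have hinj : Set.InjOn id (T : Set ℝ) := Function.injective_id.injOn
  conv_lhs => rw [Lagrange.eq_interpolate hinj h]
  simp only [Lagrange.interpolate_apply, Polynomial.eval_finset_sum, Polynomial.eval_mul,
    Polynomial.eval_C, g, id]

noncomputable def n (T : Finset ℝ) (t : ℝ) : ℕ := (T.filter (fun s => s < t)).card

lemma prod_neg' (F : Finset ℝ) (f : ℝ → ℝ) :
    ∏ s ∈ F, (-(f s)) = (-1 : ℝ) ^ F.card * ∏ s ∈ F, f s := by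
  rw [← Finset.prod_const, ← Finset.prod_mul_distrib]
  exact Finset.prod_congr rfl fun s _ => (neg_one_mul _).symm

lemma g_pos (T : Finset ℝ) (hT : ∀ s ∈ T, (0:ℝ) < s) {t : ℝ} (ht : t ∈ T) :
    0 < (-1 : ℝ) ^ (n T t) * g T t := by
  classical
  rw [g_eq]
  have herase : (T.erase t).filter (fun s => s < t) = T.filter (fun s => s < t) := by
    rw [Finset.filter_erase]
    exact Finset.erase_eq_of_notMem (by simp)
  rw [← Finset.prod_filter_mul_prod_filter_not (T.erase t) (fun s => s < t)]
  have h1 : ((-1 : ℝ) ^ (n T t)) * ∏ s ∈ (T.erase t).filter (fun s => s < t), ((0 - s) / (t - s))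
      = ∏ s ∈ (T.erase t).filter (fun s => s < t), (-((0 - s) / (t - s))) := by
    rw [prod_neg', herase]; rfl
  rw [← mul_assoc, h1]
  apply mul_pos
  · apply Finset.prod_pos
    intro s hs
    rw [Finset.mem_filter] at hs
    have hs0 : 0 < s := hT s (Finset.mem_of_mem_erase hs.1)
    have hst : s < t := hs.2
    rw [neg_div' ]
    apply div_pos (by linarith) (by linarith)
  · apply Finset.prod_pos
    intro s hs
    rw [Finset.mem_filter] at hs
    have hsT := Finset.mem_of_mem_erase hs.1
    have hs0 : 0 < s := hT s hsT
    have hst : t < s := lt_of_le_of_ne (not_lt.mp hs.2) (Ne.symm (Finset.ne_of_mem_erase hs.1))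
    apply div_pos_of_neg_of_neg <;> linarith

lemma g_ne_zero (T : Finset ℝ) (hT : ∀ s ∈ T, (0:ℝ) < s) {t : ℝ} (ht : t ∈ T) :
    g T t ≠ 0 := by
  intro h
  have := g_pos T hT ht
  rw [h, mul_zero] at this
  exact lt_irrefl 0 this

lemma abs_g_eq (T : Finset ℝ) (hT : ∀ s ∈ T, (0:ℝ) < s) {t : ℝ} (ht : t ∈ T) :
    |g T t| = (-1 : ℝ) ^ (n T t) * g T t := by
  have h := g_pos T hT ht
  rw [← abs_of_pos h, abs_mul, abs_pow, abs_neg, abs_one, one_pow, one_mul]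

lemma g_eq_sign_mul_abs (T : Finset ℝ) (hT : ∀ s ∈ T, (0:ℝ) < s) {t : ℝ} (ht : t ∈ T) :
    g T t = (-1 : ℝ) ^ (n T t) * |g T t| := by
  rw [abs_g_eq T hT ht, ← mul_assoc, ← mul_pow]
  simp

lemma Ls_pos (T : Finset ℝ) (hT : ∀ s ∈ T, (0:ℝ) < s) (hne : T.Nonempty) : 0 < Ls T := by
  obtain ⟨t, ht⟩ := hne
  have h1 : 0 < |g T t| := abs_pos.mpr (g_ne_zero T hT ht)
  have h2 : ∀ s ∈ T, 0 ≤ |g T s| := fun s _ => abs_nonneg _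
  calc 0 < |g T t| := h1
    _ ≤ Ls T := Finset.single_le_sum h2 ht


lemma negpow_mul_self (m : ℕ) : (-1:ℝ)^m * (-1:ℝ)^m = 1 := by
  rw [← pow_add]; exact Even.neg_one_pow ⟨m, rfl⟩

lemma negpow_mul_succ (m : ℕ) : (-1:ℝ)^m * (-1:ℝ)^(m+1) = -1 := by
  rw [pow_succ, ← mul_assoc, negpow_mul_self]; ring

lemma negpow_two_add (m : ℕ) : (-1:ℝ)^(m+2) = (-1:ℝ)^m := by
  rw [pow_add]; norm_num

lemma aux_pos {S : ℝ} (m : ℕ) (h : 0 < S * (-1:ℝ)^m) : S * (-1:ℝ)^m = |S| := by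
  have h2 : |S * (-1:ℝ)^m| = |S| := by
    rw [abs_mul, abs_pow, abs_neg, abs_one, one_pow, mul_one]
  rw [← h2]; exact (abs_of_pos h).symm

lemma n_ins_erase {T : Finset ℝ} {ν d : ℝ} (hd : d ∈ T) (hν : ν ∉ T) (t : ℝ) :
    n (insert ν (T.erase d)) t + (if d < t then 1 else 0)
      = n T t + (if ν < t then 1 else 0) := by
  classical
  have hνf : ν ∉ T.filter (fun s => s < t) := fun h => hν (Finset.mem_filter.mp h).1
  unfold n
  rw [Finset.filter_insert, Finset.filter_erase]
  by_cases h2 : d < t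
  · have hdf : d ∈ T.filter (fun s => s < t) := Finset.mem_filter.mpr ⟨hd, h2⟩
    have hce : ((T.filter (fun s => s < t)).erase d).card
        = (T.filter (fun s => s < t)).card - 1 := Finset.card_erase_of_mem hdf
    have hpos : 1 ≤ (T.filter (fun s => s < t)).card := Finset.card_pos.mpr ⟨d, hdf⟩
    by_cases h1 : ν < t
    · have hνe : ν ∉ (T.filter (fun s => s < t)).erase d :=
        fun h => hνf (Finset.mem_of_mem_erase h)
      rw [if_pos h1, if_pos h2, Finset.card_insert_of_notMem hνe, hce]
      simp only [if_pos h1]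
      omega
    · rw [if_neg h1, if_pos h2, hce]
      simp only [if_neg h1]
      omega
  · have hdf : d ∉ T.filter (fun s => s < t) := fun h => h2 (Finset.mem_filter.mp h).2
    have hce : (T.filter (fun s => s < t)).erase d = T.filter (fun s => s < t) :=
      Finset.erase_eq_of_notMem hdf
    by_cases h1 : ν < t
    · have hνe : ν ∉ (T.filter (fun s => s < t)).erase d :=
        fun h => hνf (Finset.mem_of_mem_erase h)
      rw [if_pos h1, if_neg h2, Finset.card_insert_of_notMem hνe, hce]
      simp only [if_pos h1]
    · rw [if_neg h1, if_neg h2, hce]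
      simp only [if_neg h1]

lemma exists_good_poly (k : ℕ) (Λ : Finset ℝ) (hΛ : ∀ s ∈ Λ, (0:ℝ) < s)
    (hcard : k + 1 ≤ Λ.card) :
    ∃ (T : Finset ℝ) (p : Polynomial ℝ), T ⊆ Λ ∧ T.card = k + 1 ∧ (∀ s ∈ T, (0:ℝ) < s) ∧
      p.natDegree ≤ k ∧ p.eval 0 = 1 ∧ 0 < Ls T ∧
      (∀ t ∈ T, p.eval t = (Ls T)⁻¹ * (-1)^(n T t)) ∧
      (∀ ν ∈ Λ, |p.eval ν| ≤ (Ls T)⁻¹) := by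
  classical
  -- choose T minimizing Ls among (k+1)-subsets
  have hCne : (Λ.powersetCard (k+1)).Nonempty := Finset.powersetCard_nonempty.mpr hcard
  obtain ⟨T, hTmem, hTmin⟩ := Finset.exists_min_image (Λ.powersetCard (k+1)) Ls hCne
  obtain ⟨hTsub, hTcard⟩ := Finset.mem_powersetCard.mp hTmem
  have hTpos : ∀ s ∈ T, (0:ℝ) < s := fun s hs => hΛ s (hTsub hs)
  have hTne : T.Nonempty := Finset.card_pos.mp (by omega)
  have hL : 0 < Ls T := Ls_pos T hTpos hTne
  set M : ℝ := (Ls T)⁻¹ with hMdef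
  have hM : 0 < M := inv_pos.mpr hL
  have hinj : Set.InjOn id (T : Set ℝ) := Function.injective_id.injOn
  set p : Polynomial ℝ :=
    M • Lagrange.interpolate T id (fun t => (-1)^(n T t)) with hpdef
  have hdegi : (Lagrange.interpolate T id (fun t => (-1:ℝ)^(n T t))).degree < T.card :=
    Lagrange.degree_interpolate_lt _ hinj
  have hdeg : p.degree < (k+1 : ℕ) := by
    calc p.degree ≤ _ := Polynomial.degree_smul_le _ _
      _ < (T.card : ℕ) := hdegi
      _ = ((k+1 : ℕ) : WithBot ℕ) := by rw [hTcard]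
  have hnat : p.natDegree ≤ k := by
    by_cases hp0 : p = 0
    · simp [hp0]
    · have := (Polynomial.natDegree_lt_iff_degree_lt hp0).mpr hdeg
      omega
  have hnode : ∀ t ∈ T, p.eval t = M * (-1)^(n T t) := by
    intro t ht
    have := Lagrange.eval_interpolate_at_node (fun t => ((-1:ℝ))^(n T t)) hinj ht
    rw [hpdef]
    simp only [Polynomial.eval_smul, smul_eq_mul]
    rw [show (t : ℝ) = id t from rfl, this]
    rfl
  have habsnode : ∀ t ∈ T, |p.eval t| = M := by
    intro t ht
    rw [hnode t ht, abs_mul, abs_pow, abs_neg, abs_one, one_pow, mul_one, abs_of_pos hM]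
  have heval0 : p.eval 0 = 1 := by
    rw [hpdef]
    simp only [Polynomial.eval_smul, smul_eq_mul, Lagrange.interpolate_apply,
      Polynomial.eval_finset_sum, Polynomial.eval_mul, Polynomial.eval_C]
    have : ∑ t ∈ T, ((-1:ℝ))^(n T t) * (Lagrange.basis T id t).eval 0 = Ls T := by
      rw [Ls]
      refine Finset.sum_congr rfl fun t ht => ?_
      rw [abs_g_eq T hTpos ht]; rfl
    rw [this, hMdef, inv_mul_cancel₀ (ne_of_gt hL)]
  refine ⟨T, p, hTsub, hTcard, hTpos, hnat, heval0, hL, hnode, ?_⟩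
  -- global bound
  intro ν hν
  by_contra hgt
  push_neg at hgt
  have hνT : ν ∉ T := by
    intro hmem
    have := habsnode ν hmem
    rw [this] at hgt
    exact lt_irrefl _ hgt
  set S : ℝ := p.eval ν with hSdef
  have hS0 : S ≠ 0 := by
    intro h
    rw [h, abs_zero] at hgt
    exact absurd hgt (not_lt.mpr (le_of_lt hM))
  set a : ℕ := n T ν with hadef
  -- the uniform contradiction finisher
  have final : ∀ d : ℝ, d ∈ T → ∀ ε : ℝ,
      (S * (-1 : ℝ) ^ (n (insert ν (T.erase d)) ν) = ε * |S|) →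
      (∀ t ∈ T.erase d, ((-1:ℝ))^(n T t) * ((-1:ℝ))^(n (insert ν (T.erase d)) t) = ε) →
      False := by
    intro d hd ε hεν hεt
    set T' : Finset ℝ := insert ν (T.erase d) with hT'def
    have hνe : ν ∉ T.erase d := fun h => hνT (Finset.mem_of_mem_erase h)
    have hT'card : T'.card = k + 1 := by
      rw [hT'def, Finset.card_insert_of_notMem hνe, Finset.card_erase_of_mem hd, hTcard]
      omega
    have hT'sub : T' ⊆ Λ := by
      rw [hT'def]
      intro x hx
      rcases Finset.mem_insert.mp hx with h | h
      · rw [h]; exact hν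
      · exact hTsub (Finset.mem_of_mem_erase h)
    have hT'pos : ∀ s ∈ T', (0:ℝ) < s := fun s hs => hΛ s (hT'sub hs)
    have hT'min : Ls T ≤ Ls T' :=
      hTmin T' (Finset.mem_powersetCard.mpr ⟨hT'sub, hT'card⟩)
    have hεabs : |ε| = 1 := by
      have := congrArg abs hεν
      rw [abs_mul, abs_mul, abs_pow, abs_neg, abs_one, one_pow, mul_one, abs_abs] at this
      have hSabs : |S| ≠ 0 := abs_ne_zero.mpr hS0
      have h2 : |ε| * |S| = 1 * |S| := by rw [one_mul]; exact this.symm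
      exact mul_right_cancel₀ hSabs h2
    -- sign matching
    have hmatch : ∀ t ∈ T', p.eval t * g T' t = ε * (|p.eval t| * |g T' t|) := by
      intro t ht
      have hsq : ((-1:ℝ))^(n T' t) * ((-1:ℝ))^(n T' t) = 1 := by
        rw [← pow_add]; exact Even.neg_one_pow ⟨n T' t, rfl⟩
      rcases Finset.mem_insert.mp ht with rfl | hte
      · rw [abs_g_eq T' hT'pos ht]
        linear_combination (-(S * g T' t)) * hsq + ((-1:ℝ)^(n T' t) * g T' t) * hεν
      · have htT : t ∈ T := Finset.mem_of_mem_erase hte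
        rw [habsnode t htT, hnode t htT, abs_g_eq T' hT'pos ht]
        linear_combination (-(M * (-1:ℝ)^(n T t) * g T' t)) * hsq
          + ((-1:ℝ)^(n T' t) * M * g T' t) * (hεt t hte)
    -- Lagrange identity on T'
    have hid : (1:ℝ) = ∑ t ∈ T', p.eval t * g T' t := by
      rw [← heval0]
      exact lagrange_identity T' p (by rw [hT'card]; exact hdeg)
    have hsum : ∑ t ∈ T', p.eval t * g T' t = ε * ∑ t ∈ T', |p.eval t| * |g T' t| := by
      rw [Finset.mul_sum]
      exact Finset.sum_congr rfl hmatch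
    set R : ℝ := ∑ t ∈ T', |p.eval t| * |g T' t| with hRdef
    have hRgt : 1 < R := by
      have hlow : ∀ t ∈ T', M * |g T' t| ≤ |p.eval t| * |g T' t| := by
        intro t ht
        rcases Finset.mem_insert.mp ht with rfl | hte
        · exact mul_le_mul_of_nonneg_right (le_of_lt hgt) (abs_nonneg _)
        · rw [habsnode t (Finset.mem_of_mem_erase hte)]
      have hstrict : M * |g T' ν| < |p.eval ν| * |g T' ν| := by
        have hgν : g T' ν ≠ 0 := g_ne_zero T' hT'pos (Finset.mem_insert_self _ _)
        exact mul_lt_mul_of_pos_right hgt (abs_pos.mpr hgν)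
      have h1 : ∑ t ∈ T', M * |g T' t| < R :=
        Finset.sum_lt_sum hlow ⟨ν, Finset.mem_insert_self _ _, hstrict⟩
      have h2 : ∑ t ∈ T', M * |g T' t| = M * Ls T' := by
        rw [Ls, Finset.mul_sum]
      have h3 : (1:ℝ) ≤ M * Ls T' := by
        calc (1:ℝ) = M * Ls T := by rw [hMdef, inv_mul_cancel₀ (ne_of_gt hL)]
          _ ≤ M * Ls T' := mul_le_mul_of_nonneg_left hT'min (le_of_lt hM)
      linarith
    have hRabs : |R| = R := abs_of_pos (by linarith)
    have : (1:ℝ) = |ε| * R := by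
      have := congrArg abs (hid.trans hsum)
      rwa [abs_one, abs_mul, hRabs] at this
    rw [hεabs, one_mul] at this
    linarith
  -- case analysis on the sign of S and position of ν
  have hSsign : 0 < S * (-1:ℝ)^a ∨ 0 < S * (-1:ℝ)^(a+1) := by
    have hne : S * (-1:ℝ)^a ≠ 0 := by
      apply mul_ne_zero hS0
      positivity
    rcases hne.lt_or_gt with h | h
    · right
      rw [pow_succ]
      nlinarith
    · left; exact h
  rcases hSsign with hpos | hneg
  · by_cases hup : (T.filter (fun s => ν < s)).Nonempty
    · -- CASE 2
      set d := (T.filter (fun s => ν < s)).min' hup with hddef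
      have hdmem : d ∈ T.filter (fun s => ν < s) := Finset.min'_mem _ hup
      have hdT : d ∈ T := (Finset.mem_filter.mp hdmem).1
      have hνd : ν < d := (Finset.mem_filter.mp hdmem).2
      have hdle : ∀ s ∈ T, ν < s → d ≤ s := fun s hs hνs =>
        Finset.min'_le _ s (Finset.mem_filter.mpr ⟨hs, hνs⟩)
      refine final d hdT 1 ?_ ?_
      · have h := n_ins_erase hdT hνT ν
        rw [if_neg (not_lt.mpr (le_of_lt hνd)), if_neg (lt_irrefl ν)] at h
        have hn : n (insert ν (T.erase d)) ν = a := by omega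
        rw [hn, one_mul]
        exact aux_pos a hpos
      · intro t hte
        have htT : t ∈ T := Finset.mem_of_mem_erase hte
        have htd : t ≠ d := Finset.ne_of_mem_erase hte
        have h := n_ins_erase hdT hνT t
        have hiff : (d < t) ↔ (ν < t) := by
          constructor
          · intro hdt; exact lt_trans hνd hdt
          · intro hνt; exact lt_of_le_of_ne (hdle t htT hνt) (Ne.symm htd)
        have hn : n (insert ν (T.erase d)) t = n T t := by
          by_cases hc : ν < t
          · rw [if_pos (hiff.mpr hc), if_pos hc] at h; omega
          · rw [if_neg (fun hdt => hc (hiff.mp hdt)), if_neg hc] at h; omega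
        rw [hn, negpow_mul_self]
    · -- CASE 4 : all of T is below ν
      have hallbelow : ∀ s ∈ T, s < ν := by
        intro s hs
        rcases lt_trichotomy s ν with h | h | h
        · exact h
        · exact absurd (h ▸ hs) hνT
        · exact absurd ⟨s, Finset.mem_filter.mpr ⟨hs, h⟩⟩ hup
      have hafull : a = k + 1 := by
        have : T.filter (fun s => s < ν) = T := Finset.filter_true_of_mem hallbelow
        rw [hadef]; unfold n; rw [this, hTcard]
      set d := T.min' hTne with hddef
      have hdT : d ∈ T := Finset.min'_mem _ _
      have hdle : ∀ s ∈ T, d ≤ s := fun s hs => Finset.min'_le _ s hs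
      refine final d hdT (-1) ?_ ?_
      · have h := n_ins_erase hdT hνT ν
        rw [if_pos (hallbelow d hdT), if_neg (lt_irrefl ν)] at h
        have hn : n (insert ν (T.erase d)) ν = k := by omega
        rw [hn]
        have h1 : S * (-1:ℝ)^(k+1) = |S| := aux_pos _ (by rwa [hafull] at hpos)
        have h2 : ((-1:ℝ))^(k+1) = -(-1:ℝ)^k := by rw [pow_succ]; ring
        rw [h2] at h1
        linarith [h1]
      · intro t hte
        have htT : t ∈ T := Finset.mem_of_mem_erase hte
        have htd : t ≠ d := Finset.ne_of_mem_erase hte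
        have h := n_ins_erase hdT hνT t
        rw [if_pos (lt_of_le_of_ne (hdle t htT) (Ne.symm htd)),
          if_neg (not_lt.mpr (le_of_lt (hallbelow t htT)))] at h
        have hn : n T t = n (insert ν (T.erase d)) t + 1 := by omega
        rw [hn, mul_comm, negpow_mul_succ]
  · by_cases hdown : (T.filter (fun s => s < ν)).Nonempty
    · -- CASE 1
      set d := (T.filter (fun s => s < ν)).max' hdown with hddef
      have hdmem : d ∈ T.filter (fun s => s < ν) := Finset.max'_mem _ hdown
      have hdT : d ∈ T := (Finset.mem_filter.mp hdmem).1
      have hdν : d < ν := (Finset.mem_filter.mp hdmem).2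
      have hdge : ∀ s ∈ T, s < ν → s ≤ d := by
        intro s hs hsν
        rw [hddef]
        exact Finset.le_max' (T.filter (fun x => x < ν)) s (Finset.mem_filter.mpr ⟨hs, hsν⟩)
      have ha1 : 1 ≤ a := by
        rw [hadef]; unfold n
        exact Finset.card_pos.mpr hdown
      refine final d hdT 1 ?_ ?_
      · have h := n_ins_erase hdT hνT ν
        rw [if_pos hdν, if_neg (lt_irrefl ν)] at h
        have hn : n (insert ν (T.erase d)) ν = a - 1 := by omega
        rw [hn, one_mul]
        have h1 : S * (-1:ℝ)^(a+1) = |S| := aux_pos _ hneg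
        have h2 : (a - 1) + 2 = a + 1 := by omega
        rw [← h2, negpow_two_add] at h1
        exact h1
      · intro t hte
        have htT : t ∈ T := Finset.mem_of_mem_erase hte
        have htd : t ≠ d := Finset.ne_of_mem_erase hte
        have h := n_ins_erase hdT hνT t
        have hiff : (d < t) ↔ (ν < t) := by
          constructor
          · intro hdt
            rcases lt_trichotomy ν t with h' | h' | h'
            · exact h'
            · exact absurd (h' ▸ htT) hνT
            · exact absurd (lt_of_le_of_ne (hdge t htT h') htd) (not_lt.mpr (le_of_lt hdt))
          · intro hνt; exact lt_trans hdν hνt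
        have hn : n (insert ν (T.erase d)) t = n T t := by
          by_cases hc : ν < t
          · rw [if_pos (hiff.mpr hc), if_pos hc] at h; omega
          · rw [if_neg (fun hdt => hc (hiff.mp hdt)), if_neg hc] at h; omega
        rw [hn, negpow_mul_self]
    · -- CASE 3 : all of T is above ν, S < 0
      have hallabove : ∀ s ∈ T, ν < s := by
        intro s hs
        rcases lt_trichotomy ν s with h | h | h
        · exact h
        · exact absurd (h ▸ hs) hνT
        · exact absurd ⟨s, Finset.mem_filter.mpr ⟨hs, h⟩⟩ hdown
      have ha0 : a = 0 := by
        rw [hadef]; unfold n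
        rw [Finset.card_eq_zero, Finset.filter_eq_empty_iff]
        exact fun {s} hs => not_lt.mpr (le_of_lt (hallabove s hs))
      have hSneg : S < 0 := by
        rw [ha0] at hneg
        simp only [pow_one, zero_add] at hneg
        nlinarith
      set d := T.max' hTne with hddef
      have hdT : d ∈ T := Finset.max'_mem _ _
      have hdge : ∀ s ∈ T, s ≤ d := by
        intro s hs
        rw [hddef]
        exact Finset.le_max' T s hs
      refine final d hdT (-1) ?_ ?_
      · have h := n_ins_erase hdT hνT ν
        rw [if_neg (not_lt.mpr (le_of_lt (hallabove d hdT))), if_neg (lt_irrefl ν)] at h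
        have hn : n (insert ν (T.erase d)) ν = 0 := by omega
        rw [hn, pow_zero, mul_one]
        rw [abs_of_neg hSneg]; ring
      · intro t hte
        have htT : t ∈ T := Finset.mem_of_mem_erase hte
        have htd : t ≠ d := Finset.ne_of_mem_erase hte
        have h := n_ins_erase hdT hνT t
        rw [if_neg (not_lt.mpr (le_of_lt (lt_of_le_of_ne (hdge t htT) htd))),
          if_pos (hallabove t htT)] at h
        have hn : n (insert ν (T.erase d)) t = n T t + 1 := by omega
        rw [hn, negpow_mul_succ]



variable {N : ℕ} {A Q : Matrix (Fin N) (Fin N) ℝ} {lam : Fin N → ℝ}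

lemma mulvec_eig (hQ : Qᵀ * Q = 1) (hAQ : A = Q * Matrix.diagonal lam * Qᵀ) (c : Fin N → ℝ) :
    A *ᵥ (Q *ᵥ c) = Q *ᵥ (fun i => lam i * c i) := by
  have hD : Matrix.diagonal lam *ᵥ c = fun i => lam i * c i := by
    funext i
    rw [mulVec_diagonal]
  rw [hAQ, mulVec_mulVec, mul_assoc, mul_assoc, hQ, mul_one, ← mulVec_mulVec, hD]

lemma pow_act (hQ : Qᵀ * Q = 1) (hAQ : A = Q * Matrix.diagonal lam * Qᵀ) (m : ℕ)
    (c : Fin N → ℝ) : (A ^ m) *ᵥ (Q *ᵥ c) = Q *ᵥ (fun i => lam i ^ m * c i) := by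
  induction m generalizing c with
  | zero => simp [Matrix.one_mulVec]
  | succ m ih =>
    rw [pow_succ, ← mulVec_mulVec, mulvec_eig hQ hAQ c, ih (fun i => lam i * c i)]
    exact congrArg (Matrix.mulVec Q) (funext fun i => by ring)

lemma poly_act (hQ : Qᵀ * Q = 1) (hAQ : A = Q * Matrix.diagonal lam * Qᵀ) (q : Polynomial ℝ)
    (c : Fin N → ℝ) :
    (Polynomial.aeval A q) *ᵥ (Q *ᵥ c) = Q *ᵥ (fun i => q.eval (lam i) * c i) := by
  induction q using Polynomial.induction_on' with
  | add p r hp hr =>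
    rw [map_add, Matrix.add_mulVec, hp, hr, ← Matrix.mulVec_add]
    exact congrArg (Matrix.mulVec Q) (funext fun i => by
      simp only [Pi.add_apply, Polynomial.eval_add]; ring)
  | monomial m a =>
    rw [Polynomial.aeval_monomial, ← mulVec_mulVec, pow_act hQ hAQ m c]
    have : (algebraMap ℝ (Matrix (Fin N) (Fin N) ℝ)) a = a • (1 : Matrix (Fin N) (Fin N) ℝ) := by
      simp [Algebra.algebraMap_eq_smul_one]
    rw [this, Matrix.smul_mulVec, Matrix.one_mulVec, ← Matrix.mulVec_smul]
    exact congrArg (Matrix.mulVec Q) (funext fun i => by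
      simp only [Pi.smul_apply, Polynomial.eval_monomial, smul_eq_mul]; ring)

lemma quadform (hQ : Qᵀ * Q = 1) (hAQ : A = Q * Matrix.diagonal lam * Qᵀ) (c₁ c₂ : Fin N → ℝ) :
    (Q *ᵥ c₁) ⬝ᵥ (A *ᵥ (Q *ᵥ c₂)) = ∑ i, lam i * (c₁ i * c₂ i) := by
  rw [mulvec_eig hQ hAQ c₂, Matrix.dotProduct_mulVec]
  have h1 : (Q *ᵥ c₁) ᵥ* Q = c₁ := by
    rw [← Matrix.mulVec_transpose, mulVec_mulVec, hQ, Matrix.one_mulVec]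
  rw [h1, dotProduct]
  exact Finset.sum_congr rfl fun i _ => by ring

lemma coordrep (hQQ : Q * Qᵀ = 1) (u : Fin N → ℝ) : Q *ᵥ (Qᵀ *ᵥ u) = u := by
  rw [mulVec_mulVec, hQQ, Matrix.one_mulVec]

lemma quad_nonneg (hQ : Qᵀ * Q = 1) (hQQ : Q * Qᵀ = 1)
    (hAQ : A = Q * Matrix.diagonal lam * Qᵀ) (hlam : ∀ i, 0 < lam i) (u : Fin N → ℝ) :
    0 ≤ u ⬝ᵥ (A *ᵥ u) := by
  have h := quadform hQ hAQ (Qᵀ *ᵥ u) (Qᵀ *ᵥ u)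
  rw [coordrep hQQ] at h
  rw [h]
  apply Finset.sum_nonneg
  intro i _
  have := hlam i
  nlinarith

lemma B_symm (hAQ : A = Q * Matrix.diagonal lam * Qᵀ) (u v : Fin N → ℝ) :
    u ⬝ᵥ (A *ᵥ v) = v ⬝ᵥ (A *ᵥ u) := by
  have hsymm : Aᵀ = A := by
    rw [hAQ, Matrix.transpose_mul, Matrix.transpose_mul, Matrix.diagonal_transpose,
      Matrix.transpose_transpose, mul_assoc]
  rw [Matrix.dotProduct_mulVec u A v, ← Matrix.mulVec_transpose, hsymm,
    dotProduct_comm]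


lemma sum_mulVec {m : Type*} [Fintype m] {ι : Type*} (s : Finset ι)
    (F : ι → Matrix m m ℝ) (v : m → ℝ) :
    (∑ i ∈ s, F i) *ᵥ v = ∑ i ∈ s, (F i *ᵥ v) := by
  induction s using Finset.cons_induction with
  | empty => simp [Matrix.zero_mulVec]
  | cons a s ha ih => rw [Finset.sum_cons, Finset.sum_cons, Matrix.add_mulVec, ih]

end Stmt4

open Stmt4

theorem stmt_4 {N : ℕ} (hN : 0 < N) (A Q : Matrix (Fin N) (Fin N) ℝ) (lam : Fin N → ℝ)
    (hlam : ∀ i, 0 < lam i) (hQ : Qᵀ * Q = 1)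
    (hAQ : A = Q * Matrix.diagonal lam * Qᵀ)
    (k : ℕ) (hk : k ≤ (minpoly ℝ A).natDegree) :
    ∃ b x₀ : Fin N → ℝ, b - A *ᵥ x₀ ≠ 0 ∧ x₀ ≠ A⁻¹ *ᵥ b ∧
      sInf {t | ∃ z : Fin N → ℝ, (∃ v ∈ krylov A (b - A *ᵥ x₀) k, z = x₀ + v) ∧
          t = Anorm A (A⁻¹ *ᵥ b - z)} =
        Anorm A (A⁻¹ *ᵥ b - x₀) *
          sInf {t | ∃ p : Polynomial ℝ, p.natDegree ≤ k ∧ p.eval 0 = 1 ∧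
            t = ⨆ i, |p.eval (lam i)|} := by
  classical
  have hQQ : Q * Qᵀ = 1 := mul_eq_one_comm.mp hQ
  have hdetQ : Q.det * Q.det = 1 := by
    have h := congrArg Matrix.det hQ
    rwa [Matrix.det_mul, Matrix.det_transpose, Matrix.det_one] at h
  have hprod : 0 < ∏ i, lam i := Finset.prod_pos (fun i _ => hlam i)
  have hdet : IsUnit A.det := by
    have h1 : A.det = Q.det * ((∏ i, lam i) * Q.det) := by
      rw [hAQ, Matrix.det_mul, Matrix.det_mul, Matrix.det_diagonal, Matrix.det_transpose,
        mul_assoc]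
    apply isUnit_iff_ne_zero.mpr
    rw [h1]
    intro h
    rcases mul_eq_zero.mp h with h | h
    · rw [h, zero_mul] at hdetQ; exact zero_ne_one hdetQ
    · rcases mul_eq_zero.mp h with h | h
      · exact absurd h (ne_of_gt hprod)
      · rw [h, mul_zero] at hdetQ; exact zero_ne_one hdetQ
  have hAinv : ∀ u : Fin N → ℝ, A⁻¹ *ᵥ (A *ᵥ u) = u := by
    intro u
    rw [mulVec_mulVec, Matrix.nonsing_inv_mul A hdet, Matrix.one_mulVec]
  set spec : Finset ℝ := Finset.image lam Finset.univ with hspec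
  have hspecpos : ∀ s ∈ spec, (0:ℝ) < s := by
    intro s hs
    obtain ⟨i, _, rfl⟩ := Finset.mem_image.mp hs
    exact hlam i
  have hspecmem : ∀ i, lam i ∈ spec := fun i => Finset.mem_image_of_mem lam (Finset.mem_univ i)
  have hbddrange : ∀ p : Polynomial ℝ, BddAbove (Set.range fun i => |p.eval (lam i)|) :=
    fun p => Set.Finite.bddAbove (Set.finite_range _)
  have i₀ : Fin N := ⟨0, hN⟩
  haveI hNE : Nonempty (Fin N) := ⟨i₀⟩
  by_cases hbig : k + 1 ≤ spec.card
  · -- MAIN CASE -----------------------------------------------------------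
    obtain ⟨T, ps, hTsub, hTcard, hTpos, hpdeg, hev0, hLpos, hnode, hbound⟩ :=
      exists_good_poly k spec hspecpos hbig
    have hTne : T.Nonempty := Finset.card_pos.mp (by omega)
    set L : ℝ := Ls T with hLdef
    -- representatives
    set rep : ℝ → Fin N := fun t => if h : ∃ i, lam i = t then h.choose else i₀ with hrepdef
    have hrepeq : ∀ t ∈ T, lam (rep t) = t := by
      intro t ht
      obtain ⟨i, _, hi⟩ := Finset.mem_image.mp (hTsub ht)
      have hex : ∃ j, lam j = t := ⟨i, hi⟩
      simp only [hrepdef, dif_pos hex]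
      exact hex.choose_spec
    set w : ℝ → ℝ := fun t => Real.sqrt (|g T t| * L / t) with hwdef
    have hw2 : ∀ t ∈ T, w t * w t = |g T t| * L / t := by
      intro t ht
      rw [hwdef]
      exact Real.mul_self_sqrt
        (div_nonneg (mul_nonneg (abs_nonneg _) hLpos.le) (hTpos t ht).le)
    set c : Fin N → ℝ := fun i => ∑ t ∈ T, if i = rep t then w t else 0 with hcdef
    have hsum : ∀ f : Fin N → ℝ, (∑ i, f i * c i) = ∑ t ∈ T, f (rep t) * w t := by
      intro f
      calc ∑ i, f i * c i
          = ∑ i, ∑ t ∈ T, (if i = rep t then f i * w t else 0) := by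
            refine Finset.sum_congr rfl fun i _ => ?_
            rw [hcdef, Finset.mul_sum]
            exact Finset.sum_congr rfl fun t _ => by split <;> simp
        _ = ∑ t ∈ T, ∑ i, (if i = rep t then f i * w t else 0) := Finset.sum_comm
        _ = ∑ t ∈ T, f (rep t) * w t := by
            refine Finset.sum_congr rfl fun t _ => ?_
            simp
    have hcrep : ∀ t ∈ T, c (rep t) = w t := by
      intro t ht
      simp only [hcdef]
      rw [Finset.sum_eq_single t]
      · simp
      · intro t' ht' hne
        have hr : rep t ≠ rep t' := by
          intro h
          exact hne (by rw [← hrepeq t' ht', ← h, hrepeq t ht])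
        rw [if_neg hr]
      · intro h; exact absurd ht h
    set e : Fin N → ℝ := Q *ᵥ c with hedef
    have hBB : ∀ G : Fin N → ℝ,
        (∑ i, G i * c i * c i) = ∑ t ∈ T, G (rep t) * (w t * w t) := by
      intro G
      have h := hsum (fun i => G i * c i)
      rw [h]
      refine Finset.sum_congr rfl fun t ht => ?_
      rw [hcrep t ht]; ring
    -- the master value computation
    have hBval : ∀ q r : Polynomial ℝ,
        ((aeval A q) *ᵥ e) ⬝ᵥ (A *ᵥ ((aeval A r) *ᵥ e)) =
          ∑ t ∈ T, t * (q.eval t * r.eval t) * (w t * w t) := by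
      intro q r
      rw [hedef, poly_act hQ hAQ q c, poly_act hQ hAQ r c, quadform hQ hAQ]
      calc ∑ i, lam i * (q.eval (lam i) * c i * (r.eval (lam i) * c i))
          = ∑ i, (lam i * (q.eval (lam i) * r.eval (lam i))) * c i * c i := by
            exact Finset.sum_congr rfl fun i _ => by ring
        _ = ∑ t ∈ T, (lam (rep t) * (q.eval (lam (rep t)) * r.eval (lam (rep t)))) *
              (w t * w t) := hBB _
        _ = ∑ t ∈ T, t * (q.eval t * r.eval t) * (w t * w t) := by
            refine Finset.sum_congr rfl fun t ht => ?_
            rw [hrepeq t ht]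
    have haeval_one : (aeval A (1 : Polynomial ℝ)) *ᵥ e = e := by
      rw [_root_.map_one, Matrix.one_mulVec]
    have hBee : e ⬝ᵥ (A *ᵥ e) = L * L := by
      have h := hBval 1 1
      rw [haeval_one] at h
      rw [h]
      have hterm : ∀ t ∈ T, t * (Polynomial.eval t 1 * Polynomial.eval t 1) * (w t * w t)
          = |g T t| * L := by
        intro t ht
        rw [hw2 t ht, Polynomial.eval_one]
        have ht0 : t ≠ 0 := ne_of_gt (hTpos t ht)
        field_simp
      rw [Finset.sum_congr rfl hterm, ← Finset.sum_mul,
        show ∑ t ∈ T, |g T t| = L from by rw [hLdef]; rfl]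
    set pe : Fin N → ℝ := (aeval A ps) *ᵥ e with hpedef
    have hBpp : pe ⬝ᵥ (A *ᵥ pe) = 1 := by
      rw [hpedef, hBval ps ps]
      have : ∀ t ∈ T, t * (ps.eval t * ps.eval t) * (w t * w t) = |g T t| * L⁻¹ := by
        intro t ht
        rw [hnode t ht, hw2 t ht]
        have ht0 : t ≠ 0 := ne_of_gt (hTpos t ht)
        have hL0 : L ≠ 0 := ne_of_gt hLpos
        have hsq2 : ((-1:ℝ))^(n T t * 2) = 1 := by
          rw [pow_mul, pow_two, negpow_mul_self]
        field_simp
        linear_combination |g T t| * hsq2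
      rw [Finset.sum_congr rfl this, ← Finset.sum_mul,
        show ∑ t ∈ T, |g T t| = L from by rw [hLdef]; rfl,
        mul_inv_cancel₀ (ne_of_gt hLpos)]
    have horthgen : ∀ j : ℕ, 1 ≤ j → j ≤ k → pe ⬝ᵥ (A *ᵥ ((A ^ j) *ᵥ e)) = 0 := by
      intro j hj1 hjk
      have hXj : (aeval A ((X : Polynomial ℝ) ^ j)) *ᵥ e = (A ^ j) *ᵥ e := by
        rw [_root_.map_pow, Polynomial.aeval_X]
      rw [hpedef, ← hXj, hBval ps (X ^ j)]
      have hstep : ∀ t ∈ T, t * (ps.eval t * ((X:Polynomial ℝ)^j).eval t) * (w t * w t)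
          = ((X:Polynomial ℝ)^j).eval t * g T t := by
        intro t ht
        rw [hnode t ht, hw2 t ht, abs_g_eq T hTpos ht]
        have ht0 : t ≠ 0 := ne_of_gt (hTpos t ht)
        have hL0 : L ≠ 0 := ne_of_gt hLpos
        have hsq2 : ((-1:ℝ))^(n T t * 2) = 1 := by
          rw [pow_mul, pow_two, negpow_mul_self]
        simp only [Polynomial.eval_pow, Polynomial.eval_X]
        field_simp
        linear_combination g T t * hsq2
      rw [Finset.sum_congr rfl hstep, ← lagrange_identity T _ ?_]
      · simp only [Polynomial.eval_pow, Polynomial.eval_X]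
        exact zero_pow (by omega)
      · rw [hTcard]
        calc ((X:Polynomial ℝ)^j).degree ≤ j := Polynomial.degree_X_pow_le j
          _ < (k+1 : ℕ) := by exact_mod_cast Nat.lt_succ_of_le hjk
    have hK : ∀ u ∈ krylov A (A *ᵥ e) k, pe ⬝ᵥ (A *ᵥ u) = 0 := by
      intro u hu
      induction hu using Submodule.span_induction with
      | mem x hx =>
          obtain ⟨i, hik, rfl⟩ := hx
          have hx2 : (A^i) *ᵥ (A *ᵥ e) = (A^(i+1)) *ᵥ e := by
            rw [mulVec_mulVec, ← pow_succ]
          rw [hx2]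
          exact horthgen (i+1) (by omega) (by omega)
      | zero => rw [Matrix.mulVec_zero, dotProduct_zero]
      | add x y hx hy ihx ihy =>
          rw [Matrix.mulVec_add, dotProduct_add, ihx, ihy, add_zero]
      | smul a x hx ih =>
          rw [Matrix.mulVec_smul, dotProduct_smul, ih, smul_zero]
    -- membership of the minimizer
    set v₀ : Fin N → ℝ := e - pe with hv0
    have hv₀K : v₀ ∈ krylov A (A *ᵥ e) k := by
      set q : Polynomial ℝ := 1 - ps with hqdef
      have hq0 : q.coeff 0 = 0 := by
        rw [Polynomial.coeff_zero_eq_eval_zero, hqdef, Polynomial.eval_sub,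
          Polynomial.eval_one, hev0, sub_self]
      obtain ⟨h, hh⟩ := Polynomial.X_dvd_iff.mpr hq0
      have hqe : v₀ = (aeval A q) *ᵥ e := by
        rw [hqdef, _root_.map_sub, _root_.map_one, Matrix.sub_mulVec, Matrix.one_mulVec, hv0, hpedef]
      by_cases hhz : h = 0
      · have hq : q = 0 := by rw [hh, hhz, mul_zero]
        rw [hqe, hq, _root_.map_zero, Matrix.zero_mulVec]
        exact Submodule.zero_mem _
      · have hdq : q.natDegree ≤ k := by
          rw [hqdef]
          refine le_trans (Polynomial.natDegree_sub_le _ _) ?_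
          simp [Polynomial.natDegree_one, hpdeg]
        have hdh : h.natDegree < k := by
          have hx := Polynomial.natDegree_X_mul hhz
          rw [← hh] at hx
          omega
        have haq : aeval A q = (aeval A h) * A := by
          rw [hh, mul_comm, _root_.map_mul, Polynomial.aeval_X]
        rw [hqe, haq, ← mulVec_mulVec]
        rw [Polynomial.aeval_eq_sum_range' hdh A]
        rw [Stmt4.sum_mulVec]
        apply Submodule.sum_mem
        intro i hi
        rw [Matrix.smul_mulVec]
        exact Submodule.smul_mem _ _
          (Submodule.subset_span ⟨i, Finset.mem_range.mp hi, rfl⟩)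
    -- basic nondegeneracy
    have hL2pos : (0:ℝ) < L * L := mul_pos hLpos hLpos
    have he0 : e ≠ 0 := by
      intro h
      rw [h, Matrix.mulVec_zero, dotProduct_zero] at hBee
      linarith
    have hAe0 : A *ᵥ e ≠ 0 := by
      intro h
      rw [h, dotProduct_zero] at hBee
      linarith
    have hAib : A⁻¹ *ᵥ (A *ᵥ e) = e := hAinv e
    refine ⟨A *ᵥ e, 0, ?_, ?_, ?_⟩
    · rw [Matrix.mulVec_zero, sub_zero]
      exact hAe0
    · rw [hAib]
      exact fun h => he0 h.symm
    · rw [Matrix.mulVec_zero, sub_zero, hAib]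
      have hlhs : sInf {t | ∃ z : Fin N → ℝ, (∃ v ∈ krylov A (A *ᵥ e) k, z = 0 + v) ∧
          t = Anorm A (e - z)} = 1 := by
        have hmem1 : (1:ℝ) ∈ {t | ∃ z : Fin N → ℝ, (∃ v ∈ krylov A (A *ᵥ e) k, z = 0 + v) ∧
            t = Anorm A (e - z)} := by
          refine ⟨0 + v₀, ⟨v₀, hv₀K, rfl⟩, ?_⟩
          have h1 : e - (0 + v₀) = pe := by rw [hv0]; abel
          rw [h1, Anorm, hBpp, Real.sqrt_one]
        have hlb : ∀ x ∈ {t | ∃ z : Fin N → ℝ, (∃ v ∈ krylov A (A *ᵥ e) k, z = 0 + v) ∧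
            t = Anorm A (e - z)}, 1 ≤ x := by
          rintro x ⟨z, ⟨v, hvK, rfl⟩, rfl⟩
          set u : Fin N → ℝ := v₀ - v with hu
          have huK : u ∈ krylov A (A *ᵥ e) k := Submodule.sub_mem _ hv₀K hvK
          have hsplit : e - (0 + v) = pe + u := by rw [hu, hv0]; abel
          have hval : (e - (0 + v)) ⬝ᵥ (A *ᵥ (e - (0 + v)))
              = 1 + u ⬝ᵥ (A *ᵥ u) := by
            rw [hsplit, Matrix.mulVec_add, dotProduct_add,
              add_dotProduct, add_dotProduct]
            have h1 : u ⬝ᵥ (A *ᵥ pe) = pe ⬝ᵥ (A *ᵥ u) := B_symm hAQ u pe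
            rw [hBpp, h1, hK u huK]
            ring
          rw [Anorm, hval]
          have h2 : (0:ℝ) ≤ u ⬝ᵥ (A *ᵥ u) := quad_nonneg hQ hQQ hAQ hlam u
          have h3 := Real.sqrt_le_sqrt (show (1:ℝ) ≤ 1 + u ⬝ᵥ (A *ᵥ u) by linarith)
          rwa [Real.sqrt_one] at h3
        exact le_antisymm (csInf_le ⟨1, hlb⟩ hmem1) (le_csInf ⟨1, hmem1⟩ hlb)
      have hrhs : sInf {t | ∃ p : Polynomial ℝ, p.natDegree ≤ k ∧ p.eval 0 = 1 ∧
          t = ⨆ i, |p.eval (lam i)|} = L⁻¹ := by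
        have hsup : (⨆ i, |ps.eval (lam i)|) = L⁻¹ := by
          apply le_antisymm
          · exact ciSup_le fun i => hbound (lam i) (hspecmem i)
          · obtain ⟨t, ht⟩ := hTne
            have h1 : |ps.eval (lam (rep t))| = L⁻¹ := by
              rw [hrepeq t ht, hnode t ht, abs_mul, abs_pow, abs_neg, abs_one, one_pow,
                mul_one, abs_of_pos (inv_pos.mpr hLpos)]
            calc L⁻¹ = |ps.eval (lam (rep t))| := h1.symm
              _ ≤ ⨆ i, |ps.eval (lam i)| := le_ciSup (hbddrange ps) (rep t)
        have hmem2 : L⁻¹ ∈ {t | ∃ p : Polynomial ℝ, p.natDegree ≤ k ∧ p.eval 0 = 1 ∧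
            t = ⨆ i, |p.eval (lam i)|} := ⟨ps, hpdeg, hev0, hsup.symm⟩
        have hlb2 : ∀ x ∈ {t | ∃ p : Polynomial ℝ, p.natDegree ≤ k ∧ p.eval 0 = 1 ∧
            t = ⨆ i, |p.eval (lam i)|}, L⁻¹ ≤ x := by
          rintro x ⟨p, hpk, hp0, rfl⟩
          set Sx : ℝ := ⨆ i, |p.eval (lam i)| with hSx
          have hdeg2 : p.degree < (T.card : ℕ) := by
            rw [hTcard]
            calc p.degree ≤ (p.natDegree : WithBot ℕ) := Polynomial.degree_le_natDegree
              _ < ((k+1 : ℕ) : WithBot ℕ) := by exact_mod_cast Nat.lt_succ_of_le hpk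
          have hident : (1:ℝ) = ∑ t ∈ T, p.eval t * g T t := by
            rw [← hp0]; exact lagrange_identity T p hdeg2
          have hple : ∀ t ∈ T, |p.eval t| ≤ Sx := by
            intro t ht
            obtain ⟨i, _, hi⟩ := Finset.mem_image.mp (hTsub ht)
            rw [← hi]
            exact le_ciSup (hbddrange p) i
          have h3 : (1:ℝ) ≤ Sx * L := by
            calc (1:ℝ) = |∑ t ∈ T, p.eval t * g T t| := by rw [← hident, abs_one]
              _ ≤ ∑ t ∈ T, |p.eval t * g T t| := Finset.abs_sum_le_sum_abs _ _
              _ = ∑ t ∈ T, |p.eval t| * |g T t| := by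
                  exact Finset.sum_congr rfl fun t _ => abs_mul _ _
              _ ≤ ∑ t ∈ T, Sx * |g T t| := by
                  refine Finset.sum_le_sum fun t ht => ?_
                  exact mul_le_mul_of_nonneg_right (hple t ht) (abs_nonneg _)
              _ = Sx * L := by
                  rw [← Finset.mul_sum, show ∑ t ∈ T, |g T t| = L from by rw [hLdef]; rfl]
          rw [inv_eq_one_div]
          exact (div_le_iff₀ hLpos).mpr (by linarith)
        exact le_antisymm (csInf_le ⟨L⁻¹, hlb2⟩ hmem2) (le_csInf ⟨L⁻¹, hmem2⟩ hlb2)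
      rw [hlhs, hrhs, sub_zero, Anorm, hBee, Real.sqrt_mul_self hLpos.le,
        mul_inv_cancel₀ (ne_of_gt hLpos)]
  · -- SMALL CASE ----------------------------------------------------------
    push_neg at hbig
    have hspecne : spec.Nonempty := ⟨lam i₀, hspecmem i₀⟩
    have hk1 : 1 ≤ k := by
      have := Finset.card_pos.mpr hspecne
      omega
    set c : Fin N → ℝ := fun i => if i = i₀ then 1 else 0 with hcdef
    set e : Fin N → ℝ := Q *ᵥ c with hedef
    have hAe : A *ᵥ e = lam i₀ • e := by
      rw [hedef, mulvec_eig hQ hAQ c, ← Matrix.mulVec_smul]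
      refine congrArg (Matrix.mulVec Q) (funext fun i => ?_)
      by_cases h : i = i₀
      · subst h; simp [hcdef]
      · simp [hcdef, h]
    have hBee : e ⬝ᵥ (A *ᵥ e) = lam i₀ := by
      rw [hedef, quadform hQ hAQ]
      rw [Finset.sum_eq_single i₀]
      · simp [hcdef]
      · intro i _ hne
        simp [hcdef, hne]
      · intro h; exact absurd (Finset.mem_univ i₀) h
    have hBeepos : 0 < e ⬝ᵥ (A *ᵥ e) := by rw [hBee]; exact hlam i₀
    have he0 : e ≠ 0 := by
      intro h
      rw [h, Matrix.mulVec_zero, dotProduct_zero] at hBeepos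
      exact lt_irrefl _ hBeepos
    have hAe0 : A *ᵥ e ≠ 0 := by
      intro h
      rw [h, dotProduct_zero] at hBeepos
      exact lt_irrefl _ hBeepos
    have hAib : A⁻¹ *ᵥ (A *ᵥ e) = e := hAinv e
    have heK : e ∈ krylov A (A *ᵥ e) k := by
      have hgen : A *ᵥ e ∈ krylov A (A *ᵥ e) k :=
        Submodule.subset_span ⟨0, by omega, by rw [pow_zero, Matrix.one_mulVec]⟩
      have h1 : e = (lam i₀)⁻¹ • (A *ᵥ e) := by
        rw [hAe, smul_smul, inv_mul_cancel₀ (ne_of_gt (hlam i₀)), one_smul]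
      have h2 := Submodule.smul_mem (krylov A (A *ᵥ e) k) (lam i₀)⁻¹ hgen
      rwa [← h1] at h2
    refine ⟨A *ᵥ e, 0, ?_, ?_, ?_⟩
    · rw [Matrix.mulVec_zero, sub_zero]
      exact hAe0
    · rw [hAib]
      exact fun h => he0 h.symm
    · rw [Matrix.mulVec_zero, sub_zero, hAib]
      have hlhs : sInf {t | ∃ z : Fin N → ℝ, (∃ v ∈ krylov A (A *ᵥ e) k, z = 0 + v) ∧
          t = Anorm A (e - z)} = 0 := by
        have hmem0 : (0:ℝ) ∈ {t | ∃ z : Fin N → ℝ, (∃ v ∈ krylov A (A *ᵥ e) k, z = 0 + v) ∧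
            t = Anorm A (e - z)} := by
          refine ⟨0 + e, ⟨e, heK, rfl⟩, ?_⟩
          have h1 : e - (0 + e) = 0 := by abel
          rw [h1, Anorm, Matrix.mulVec_zero, dotProduct_zero, Real.sqrt_zero]
        have hlb : ∀ x ∈ {t | ∃ z : Fin N → ℝ, (∃ v ∈ krylov A (A *ᵥ e) k, z = 0 + v) ∧
            t = Anorm A (e - z)}, 0 ≤ x := by
          rintro x ⟨z, _, rfl⟩
          exact Real.sqrt_nonneg _
        exact le_antisymm (csInf_le ⟨0, hlb⟩ hmem0) (le_csInf ⟨0, hmem0⟩ hlb)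
      have hrhs : sInf {t | ∃ p : Polynomial ℝ, p.natDegree ≤ k ∧ p.eval 0 = 1 ∧
          t = ⨆ i, |p.eval (lam i)|} = 0 := by
        set pbig : Polynomial ℝ := ∏ μ ∈ spec, (1 - Polynomial.C μ⁻¹ * Polynomial.X)
          with hpbig
        have hdegp : pbig.natDegree ≤ k := by
          refine le_trans (Polynomial.natDegree_prod_le _ _) ?_
          have h1 : ∀ μ ∈ spec,
              (1 - Polynomial.C μ⁻¹ * Polynomial.X : Polynomial ℝ).natDegree ≤ 1 := by
            intro μ _
            refine le_trans (Polynomial.natDegree_sub_le _ _) ?_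
            refine max_le (by simp [Polynomial.natDegree_one]) ?_
            exact le_trans (Polynomial.natDegree_C_mul_le _ _)
              (by simp [Polynomial.natDegree_X])
          calc ∑ μ ∈ spec, (1 - Polynomial.C μ⁻¹ * Polynomial.X : Polynomial ℝ).natDegree
              ≤ ∑ _μ ∈ spec, 1 := Finset.sum_le_sum h1
            _ = spec.card := by rw [Finset.sum_const, smul_eq_mul, mul_one]
            _ ≤ k := by omega
        have hev0p : pbig.eval 0 = 1 := by
          rw [hpbig, Polynomial.eval_prod]
          refine Finset.prod_eq_one fun μ _ => ?_
          simp
        have hvanish : ∀ i : Fin N, pbig.eval (lam i) = 0 := by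
          intro i
          rw [hpbig, Polynomial.eval_prod]
          refine Finset.prod_eq_zero (hspecmem i) ?_
          simp only [Polynomial.eval_sub, Polynomial.eval_mul, Polynomial.eval_one,
            Polynomial.eval_C, Polynomial.eval_X]
          rw [inv_mul_cancel₀ (ne_of_gt (hlam i)), sub_self]
        have hsup0 : (⨆ i, |pbig.eval (lam i)|) = 0 := by
          have h1 : (fun i : Fin N => |pbig.eval (lam i)|) = fun _ => (0:ℝ) :=
            funext fun i => by rw [hvanish i, abs_zero]
          rw [h1, ciSup_const]
        have hmem0 : (0:ℝ) ∈ {t | ∃ p : Polynomial ℝ, p.natDegree ≤ k ∧ p.eval 0 = 1 ∧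
            t = ⨆ i, |p.eval (lam i)|} := ⟨pbig, hdegp, hev0p, hsup0.symm⟩
        have hlb0 : ∀ x ∈ {t | ∃ p : Polynomial ℝ, p.natDegree ≤ k ∧ p.eval 0 = 1 ∧
            t = ⨆ i, |p.eval (lam i)|}, 0 ≤ x := by
          rintro x ⟨p, _, _, rfl⟩
          exact le_trans (abs_nonneg _) (le_ciSup (hbddrange p) i₀)
        exact le_antisymm (csInf_le ⟨0, hlb0⟩ hmem0) (le_csInf ⟨0, hmem0⟩ hlb0)
      rw [hlhs, hrhs, mul_zero]
end

section
/- Let A be an N×N real symmetric positive definite matrix with eigenvalues λ₁,…,λ_N and let d(A) be the degree of the minimal polynomial of A. Then for every k = 1,…,d(A)−1 there exist k+1 distinct eigenvalues λ̂₁,…,λ̂_{k+1} of A such that min over p ∈ P_k(0) of max over 1 ≤ j ≤ N of |p(λ_j)| equals ( Σ_{i=1}^{k+1} Π_{j≠i} |λ̂_j| / |λ̂_j − λ̂_i| )^{−1}. -/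
open Matrix Polynomial Finset

noncomputable def cfn (T : Finset ℝ) (x : ℝ) : ℝ := ∏ y ∈ T.erase x, (0 - y) / (x - y)
noncomputable def sgn (T : Finset ℝ) (x : ℝ) : ℝ := (-1) ^ ((T.filter (fun y => y < x)).card)
noncomputable def Wfn (T : Finset ℝ) : ℝ := ∑ x ∈ T, ∏ y ∈ T.erase x, |y| / |y - x|

theorem abs_prod_pos {T : Finset ℝ} {x : ℝ} (hpos : ∀ y ∈ T, 0 < y) :
    0 < ∏ y ∈ T.erase x, |y| / |y - x| := by
  refine Finset.prod_pos fun y hy => ?_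
  have hyx : y - x ≠ 0 := sub_ne_zero.mpr (Finset.mem_erase.mp hy).1
  have := hpos y (Finset.mem_erase.mp hy).2
  positivity

theorem Wfn_pos {T : Finset ℝ} (hne : T.Nonempty) (hpos : ∀ y ∈ T, 0 < y) : 0 < Wfn T :=
  Finset.sum_pos (fun _ _ => abs_prod_pos hpos) hne

theorem sgn_eq {T : Finset ℝ} {x : ℝ} : sgn T x = 1 ∨ sgn T x = -1 := by
  rw [sgn]
  rcases Nat.even_or_odd ((T.filter (fun y => y < x)).card) with h | h
  · left; exact h.neg_one_pow
  · right; exact h.neg_one_pow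

theorem sgn_sq {T : Finset ℝ} {x : ℝ} : sgn T x * sgn T x = 1 := by
  rcases sgn_eq (T := T) (x := x) with h | h <;> rw [h] <;> norm_num

theorem lagrange_zero {p : Polynomial ℝ} {T : Finset ℝ} (hdeg : p.degree < T.card) :
    p.eval 0 = ∑ x ∈ T, p.eval x * cfn T x := by
  have hinj : Set.InjOn id (T : Set ℝ) := Function.injective_id.injOn
  have h := Lagrange.eq_interpolate (f := p) hinj hdeg
  conv_lhs => rw [h]
  rw [Lagrange.interpolate_apply, eval_finset_sum]
  refine Finset.sum_congr rfl fun x hx => ?_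
  rw [eval_mul, eval_C]
  congr 1
  rw [Lagrange.basis, eval_prod, cfn]
  refine Finset.prod_congr rfl fun y hy => ?_
  rw [Lagrange.basisDivisor, eval_mul, eval_C, eval_sub, eval_X, eval_C, id, id]
  rw [div_eq_inv_mul]

theorem cfn_eq {T : Finset ℝ} {x : ℝ} (hpos : ∀ y ∈ T, 0 < y) :
    cfn T x = sgn T x * ∏ y ∈ T.erase x, |y| / |y - x| := by
  have key : ∀ y ∈ T.erase x, (0 - y) / (x - y)
      = (if y < x then (-1 : ℝ) else 1) * (|y| / |y - x|) := by
    intro y hy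
    have hyx := (Finset.mem_erase.mp hy).1
    have hy0 := hpos y (Finset.mem_erase.mp hy).2
    rcases lt_or_gt_of_ne hyx with h | h
    · rw [if_pos h, abs_of_pos hy0, abs_of_neg (by linarith : y - x < 0)]
      have h1 : x - y ≠ 0 := by linarith
      field_simp
      ring
    · rw [if_neg (not_lt.mpr h.le), abs_of_pos hy0, abs_of_pos (by linarith : 0 < y - x)]
      have h1 : x - y ≠ 0 := by linarith
      have h2 : y - x ≠ 0 := by linarith
      field_simp
      ring
  rw [cfn, Finset.prod_congr rfl key, Finset.prod_mul_distrib]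
  congr 1
  rw [Finset.prod_ite, Finset.prod_const, Finset.prod_const, one_pow, mul_one, sgn]
  congr 2
  rw [Finset.filter_erase]
  rw [Finset.erase_eq_of_notMem]
  simp

theorem duality {p : Polynomial ℝ} {T : Finset ℝ} {M : ℝ} (hdeg : p.degree < T.card)
    (hp0 : p.eval 0 = 1) (hpos : ∀ y ∈ T, 0 < y) (hM : ∀ x ∈ T, |p.eval x| ≤ M) :
    1 ≤ M * Wfn T := by
  have h := lagrange_zero hdeg
  rw [hp0] at h
  have habs : ∀ x ∈ T, |cfn T x| = ∏ y ∈ T.erase x, |y| / |y - x| := by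
    intro x _
    rw [cfn_eq hpos, abs_mul]
    rcases sgn_eq (T := T) (x := x) with hs | hs <;>
      rw [hs, abs_of_pos (abs_prod_pos hpos)] <;> norm_num
  calc (1:ℝ) = ∑ x ∈ T, p.eval x * cfn T x := h
    _ ≤ ∑ x ∈ T, |p.eval x * cfn T x| :=
        Finset.sum_le_sum fun x _ => le_abs_self _
    _ = ∑ x ∈ T, |p.eval x| * (∏ y ∈ T.erase x, |y| / |y - x|) := by
        refine Finset.sum_congr rfl fun x hx => ?_
        rw [abs_mul, habs x hx]
    _ ≤ ∑ x ∈ T, M * (∏ y ∈ T.erase x, |y| / |y - x|) := by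
        refine Finset.sum_le_sum fun x hx => ?_
        exact mul_le_mul_of_nonneg_right (hM x hx) (abs_prod_pos hpos).le
    _ = M * Wfn T := by rw [Wfn, Finset.mul_sum]

theorem altern {p : Polynomial ℝ} {T : Finset ℝ} {E ε : ℝ} (hdeg : p.degree < T.card)
    (hp0 : p.eval 0 = 1) (hpos : ∀ y ∈ T, 0 < y) (hE : 0 < E)
    (hε : ε = 1 ∨ ε = -1)
    (hge : ∀ x ∈ T, E ≤ ε * (sgn T x * p.eval x))
    {x0 : ℝ} (hx0 : x0 ∈ T) (hstrict : E < ε * (sgn T x0 * p.eval x0)) :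
    Wfn T < 1 / E := by
  have h := lagrange_zero hdeg
  rw [hp0] at h
  have hε2 : ε * ε = 1 := by rcases hε with h | h <;> rw [h] <;> norm_num
  have hid : ε = ∑ x ∈ T, (ε * (sgn T x * p.eval x)) * (∏ y ∈ T.erase x, |y| / |y - x|) := by
    have : ∀ x ∈ T, (ε * (sgn T x * p.eval x)) * (∏ y ∈ T.erase x, |y| / |y - x|)
        = ε * (p.eval x * cfn T x) := by
      intro x _
      rw [cfn_eq hpos]
      have := sgn_sq (T := T) (x := x)
      nlinarith [sgn_sq (T := T) (x := x)]
    rw [Finset.sum_congr rfl this, ← Finset.mul_sum, ← h, mul_one]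
  have hlt : E * Wfn T < ε := by
    rw [hid, Wfn, Finset.mul_sum]
    refine Finset.sum_lt_sum (fun x hx => ?_) ⟨x0, hx0, ?_⟩
    · exact mul_le_mul_of_nonneg_right (hge x hx) (abs_prod_pos hpos).le
    · exact mul_lt_mul_of_pos_right hstrict (abs_prod_pos hpos)
  have hε1 : ε ≤ 1 := by rcases hε with h | h <;> rw [h] <;> norm_num
  rw [lt_div_iff₀ hE]
  nlinarith
theorem sgn_rel {T : Finset ℝ} {r μ : ℝ} (hr : r ∈ T) (hμ : μ ∉ T) (x : ℝ) :
    sgn (insert μ (T.erase r)) x * (if r < x then (-1:ℝ) else 1)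
      = sgn T x * (if μ < x then (-1:ℝ) else 1) := by
  rw [sgn, sgn, Finset.filter_insert, Finset.filter_erase]
  have hμF : μ ∉ (T.filter (fun y => y < x)).erase r :=
    fun h => hμ (Finset.mem_of_mem_filter μ (Finset.mem_of_mem_erase h))
  by_cases hrx : r < x
  · have h1 : ((T.filter (fun y => y < x)).erase r).card + 1
        = (T.filter (fun y => y < x)).card :=
      Finset.card_erase_add_one (Finset.mem_filter.mpr ⟨hr, hrx⟩)
    by_cases hμx : μ < x
    · rw [if_pos hμx, if_pos hrx, if_pos hμx, Finset.card_insert_of_notMem hμF, ← h1]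
    · rw [if_neg hμx, if_pos hrx, if_neg hμx, ← h1]
      ring
  · have h1 : (T.filter (fun y => y < x)).erase r = T.filter (fun y => y < x) :=
      Finset.erase_eq_of_notMem (fun h => hrx (Finset.mem_filter.mp h).2)
    by_cases hμx : μ < x
    · rw [if_pos hμx, if_neg hrx, if_pos hμx, Finset.card_insert_of_notMem hμF, h1]
      ring
    · rw [if_neg hμx, if_neg hrx, if_neg hμx, h1]

theorem eq_mul_of_mul_eq1 {A B i : ℝ} (hi : i * i = 1) (h : A * i = B) : A = B * i := by
  calc A = A * i * i := by rw [mul_assoc, hi, mul_one]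
  _ = B * i := by rw [h]

theorem exchange {T : Finset ℝ} {p : Polynomial ℝ} {E r μ ε : ℝ}
    (hpos : ∀ y ∈ T, 0 < y) (hμpos : 0 < μ) (hr : r ∈ T) (hμ : μ ∉ T)
    (hdeg : p.degree < T.card) (hp0 : p.eval 0 = 1)
    (hval : ∀ x ∈ T, p.eval x = sgn T x * E) (hE : 0 < E)
    (hvE : E < |p.eval μ|)
    (hε : ε = 1 ∨ ε = -1)
    (hcancel : ∀ x ∈ T.erase r,
      ε * ((if r < x then (-1:ℝ) else 1) * (if μ < x then (-1:ℝ) else 1)) = 1)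
    (hμc : (ε * (if r < μ then (-1:ℝ) else 1)) * (sgn T μ * p.eval μ) = |p.eval μ|) :
    Wfn (insert μ (T.erase r)) < 1 / E := by
  have hμ' : μ ∉ T.erase r := fun h => hμ (Finset.mem_of_mem_erase h)
  have hcard : (insert μ (T.erase r)).card = T.card := by
    rw [Finset.card_insert_of_notMem hμ', Finset.card_erase_add_one hr]
  have hpos' : ∀ y ∈ insert μ (T.erase r), 0 < y := by
    intro y hy
    rcases Finset.mem_insert.mp hy with h | h
    · exact h ▸ hμpos
    · exact hpos y (Finset.mem_of_mem_erase h)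
  have hsqr : ∀ x : ℝ, (if r < x then (-1:ℝ) else 1) * (if r < x then (-1:ℝ) else 1) = 1 := by
    intro x; split_ifs <;> norm_num
  have hstrict : E < ε * (sgn (insert μ (T.erase r)) μ * p.eval μ) := by
    have hrel := sgn_rel hr hμ μ
    rw [if_neg (lt_irrefl μ), mul_one] at hrel
    have hs' := eq_mul_of_mul_eq1 (hsqr μ) hrel
    rw [hs']
    calc E < |p.eval μ| := hvE
      _ = (ε * (if r < μ then (-1:ℝ) else 1)) * (sgn T μ * p.eval μ) := hμc.symm
      _ = ε * (sgn T μ * (if r < μ then (-1:ℝ) else 1) * p.eval μ) := by ring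
  have hge : ∀ x ∈ insert μ (T.erase r), E ≤ ε * (sgn (insert μ (T.erase r)) x * p.eval x) := by
    intro x hx
    rcases Finset.mem_insert.mp hx with h | h
    · exact h ▸ hstrict.le
    · have hxT : x ∈ T := Finset.mem_of_mem_erase h
      have hrel := sgn_rel hr hμ x
      have hs' := eq_mul_of_mul_eq1 (hsqr x) hrel
      rw [hs', hval x hxT]
      refine le_of_eq ?_
      have : ε * (sgn T x * (if μ < x then (-1:ℝ) else 1) * (if r < x then (-1:ℝ) else 1)
          * (sgn T x * E))
          = (ε * ((if r < x then (-1:ℝ) else 1) * (if μ < x then (-1:ℝ) else 1)))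
            * ((sgn T x * sgn T x) * E) := by ring
      rw [this, hcancel x h, sgn_sq, one_mul, one_mul]
  exact altern (hcard ▸ hdeg) hp0 hpos' hE hε hge (Finset.mem_insert_self μ _) hstrict

theorem sgn_abs {T : Finset ℝ} {x : ℝ} : |sgn T x| = 1 := by
  rcases sgn_eq (T := T) (x := x) with h | h <;> rw [h] <;> norm_num

theorem main_claim {S T : Finset ℝ} {k : ℕ} (hSpos : ∀ y ∈ S, 0 < y)
    (hT : T ∈ Finset.powersetCard (k+1) S)
    (hmin : ∀ T' ∈ Finset.powersetCard (k+1) S, Wfn T ≤ Wfn T')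
    {p : Polynomial ℝ} (hdeg : p.degree < T.card) (hp0 : p.eval 0 = 1)
    (hval : ∀ x ∈ T, p.eval x = sgn T x * (Wfn T)⁻¹) :
    ∀ μ ∈ S, |p.eval μ| ≤ (Wfn T)⁻¹ := by
  obtain ⟨hTsub, hTcard⟩ := Finset.mem_powersetCard.mp hT
  have hTpos : ∀ y ∈ T, 0 < y := fun y hy => hSpos y (hTsub hy)
  have hTne : T.Nonempty := Finset.card_pos.mp (by rw [hTcard]; omega)
  have hW : 0 < Wfn T := Wfn_pos hTne hTpos
  set E := (Wfn T)⁻¹ with hEdef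
  have hE : 0 < E := inv_pos.mpr hW
  intro μ hμS
  by_contra hgt
  push_neg at hgt
  have hμpos : 0 < μ := hSpos μ hμS
  have hμT : μ ∉ T := by
    intro h
    rw [hval μ h, abs_mul, sgn_abs, one_mul, abs_of_pos hE] at hgt
    exact lt_irrefl E hgt
  -- main dichotomy on sign
  have h1 : |sgn T μ * p.eval μ| = |p.eval μ| := by rw [abs_mul, sgn_abs, one_mul]
  have hsv : sgn T μ * p.eval μ = |p.eval μ| ∨ sgn T μ * p.eval μ = -|p.eval μ| := by
    rcases abs_choice (sgn T μ * p.eval μ) with h | h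
    · left; rw [← h1, h]
    · right; rw [← h1]; linarith [h]
  -- generic finishing move
  have finish : ∀ r ∈ T, ∀ ε : ℝ, (ε = 1 ∨ ε = -1) →
      (∀ x ∈ T.erase r,
        ε * ((if r < x then (-1:ℝ) else 1) * (if μ < x then (-1:ℝ) else 1)) = 1) →
      ((ε * (if r < μ then (-1:ℝ) else 1)) * (sgn T μ * p.eval μ) = |p.eval μ|) → False := by
    intro r hr ε hε hcancel hμc
    have hlt := exchange hTpos hμpos hr hμT hdeg hp0 hval hE hgt hε hcancel hμc
    rw [hEdef, one_div, inv_inv] at hlt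
    have hmem : insert μ (T.erase r) ∈ Finset.powersetCard (k+1) S := by
      refine Finset.mem_powersetCard.mpr ⟨?_, ?_⟩
      · intro y hy
        rcases Finset.mem_insert.mp hy with h | h
        · exact h ▸ hμS
        · exact hTsub (Finset.mem_of_mem_erase h)
      · rw [Finset.card_insert_of_notMem (fun h => hμT (Finset.mem_of_mem_erase h)),
          Finset.card_erase_add_one hr, hTcard]
    exact absurd (hmin _ hmem) (not_le.mpr hlt)
  rcases hsv with hsv | hsv
  · by_cases hAb : (T.filter (fun y => μ < y)).Nonempty
    · -- r = min of elements above μ, ε = 1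
      set r := (T.filter (fun y => μ < y)).min' hAb with hrdef
      have hrmem := Finset.min'_mem _ hAb
      have hrT : r ∈ T := (Finset.mem_filter.mp hrmem).1
      have hμr : μ < r := (Finset.mem_filter.mp hrmem).2
      refine finish r hrT 1 (Or.inl rfl) ?_ ?_
      · intro x hx
        have hxr := (Finset.mem_erase.mp hx).1
        have hxT := (Finset.mem_erase.mp hx).2
        have hiff : r < x ↔ μ < x := by
          constructor
          · intro h; linarith
          · intro h
            have := Finset.min'_le (T.filter (fun y => μ < y)) x (Finset.mem_filter.mpr ⟨hxT, h⟩)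
            rw [← hrdef] at this
            exact lt_of_le_of_ne this (Ne.symm hxr)
        rw [one_mul]
        by_cases h : μ < x
        · rw [if_pos (hiff.mpr h), if_pos h]; norm_num
        · rw [if_neg (fun hc => h (hiff.mp hc)), if_neg h]; norm_num
      · rw [if_neg (not_lt.mpr hμr.le), one_mul, one_mul]; exact hsv
    · -- all of T below μ; r = min T, ε = -1
      set r := T.min' hTne with hrdef
      have hrT : r ∈ T := Finset.min'_mem _ hTne
      have hbelow : ∀ x ∈ T, x < μ := by
        intro x hx
        rcases lt_or_ge x μ with h | h
        · exact h
        · exact absurd ⟨x, Finset.mem_filter.mpr ⟨hx, lt_of_le_of_ne h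
            (fun hc => hμT (hc ▸ hx))⟩⟩ hAb
      refine finish r hrT (-1) (Or.inr rfl) ?_ ?_
      · intro x hx
        have hxr := (Finset.mem_erase.mp hx).1
        have hxT := (Finset.mem_erase.mp hx).2
        have hrx : r < x := lt_of_le_of_ne (Finset.min'_le _ x hxT) (Ne.symm hxr)
        rw [if_pos hrx, if_neg (not_lt.mpr (hbelow x hxT).le)]
        norm_num
      · rw [if_pos (hbelow r hrT), hsv]; norm_num
  · by_cases hB : (T.filter (fun y => y < μ)).Nonempty
    · -- r = max of elements below μ, ε = 1
      set r := (T.filter (fun y => y < μ)).max' hB with hrdef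
      have hrmem := Finset.max'_mem _ hB
      have hrT : r ∈ T := (Finset.mem_filter.mp hrmem).1
      have hrμ : r < μ := (Finset.mem_filter.mp hrmem).2
      refine finish r hrT 1 (Or.inl rfl) ?_ ?_
      · intro x hx
        have hxr := (Finset.mem_erase.mp hx).1
        have hxT := (Finset.mem_erase.mp hx).2
        have hiff : r < x ↔ μ < x := by
          constructor
          · intro h
            rcases lt_or_ge μ x with h2 | h2
            · exact h2
            · have hxμ : x < μ := lt_of_le_of_ne h2 (fun hc => hμT (hc ▸ hxT))
              have := Finset.le_max' (T.filter (fun y => y < μ)) x (Finset.mem_filter.mpr ⟨hxT, hxμ⟩)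
              rw [← hrdef] at this
              linarith
          · intro h; linarith
        rw [one_mul]
        by_cases h : μ < x
        · rw [if_pos (hiff.mpr h), if_pos h]; norm_num
        · rw [if_neg (fun hc => h (hiff.mp hc)), if_neg h]; norm_num
      · rw [if_pos hrμ, hsv]; norm_num
    · -- all of T above μ; r = max T, ε = -1
      set r := T.max' hTne with hrdef
      have hrT : r ∈ T := Finset.max'_mem _ hTne
      have habove : ∀ x ∈ T, μ < x := by
        intro x hx
        rcases lt_or_ge μ x with h | h
        · exact h
        · exact absurd ⟨x, Finset.mem_filter.mpr ⟨hx, lt_of_le_of_ne h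
            (fun hc => hμT (hc ▸ hx))⟩⟩ hB
      refine finish r hrT (-1) (Or.inr rfl) ?_ ?_
      · intro x hx
        have hxr := (Finset.mem_erase.mp hx).1
        have hxT := (Finset.mem_erase.mp hx).2
        have hxrlt : x < r := lt_of_le_of_ne (Finset.le_max' _ x hxT) hxr
        rw [if_neg (not_lt.mpr hxrlt.le), if_pos (habove x hxT)]
        norm_num
      · rw [if_neg (not_lt.mpr (habove r hrT).le), hsv]; norm_num

theorem minpoly_deg_le {N : ℕ} (A Q : Matrix (Fin N) (Fin N) ℝ) (lam : Fin N → ℝ)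
    (hQ : Qᵀ * Q = 1) (hAQ : A = Q * Matrix.diagonal lam * Qᵀ) :
    (minpoly ℝ A).natDegree ≤ (Finset.image lam Finset.univ).card := by
  have hQQ : Q * Qᵀ = 1 := mul_eq_one_comm.mp hQ
  set S := Finset.image lam Finset.univ with hS
  set P : Polynomial ℝ := ∏ μ ∈ S, (X - C μ) with hP
  have hPmonic : P.Monic := monic_prod_of_monic _ _ fun μ _ => monic_X_sub_C μ
  have hPne : P ≠ 0 := hPmonic.ne_zero
  have hPdeg : P.natDegree = S.card := by
    rw [hP, natDegree_prod _ _ fun μ _ => X_sub_C_ne_zero μ]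
    simp [natDegree_X_sub_C]
  -- conjugation algebra hom
  let ψ : Matrix (Fin N) (Fin N) ℝ →ₐ[ℝ] Matrix (Fin N) (Fin N) ℝ :=
    { toFun := fun X => Q * X * Qᵀ
      map_one' := by show Q * 1 * Qᵀ = 1; rw [mul_one, hQQ]
      map_mul' := fun X Y => by
        show Q * (X * Y) * Qᵀ = (Q * X * Qᵀ) * (Q * Y * Qᵀ)
        calc Q * (X * Y) * Qᵀ = Q * X * (Qᵀ * Q) * Y * Qᵀ := by
              rw [hQ, Matrix.mul_one]; noncomm_ring
          _ = (Q * X * Qᵀ) * (Q * Y * Qᵀ) := by noncomm_ring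
      map_zero' := by show Q * 0 * Qᵀ = 0; rw [mul_zero, zero_mul]
      map_add' := fun X Y => by show _ = _; rw [mul_add, add_mul]
      commutes' := fun r => by
        show Q * (algebraMap ℝ _ r) * Qᵀ = algebraMap ℝ _ r
        rw [Algebra.algebraMap_eq_smul_one, Matrix.mul_smul, Matrix.smul_mul,
          mul_one, hQQ] }
  have hAψ : A = ψ (Matrix.diagonal lam) := by rw [hAQ]; rfl
  have hlamP : (aeval lam P : Fin N → ℝ) = 0 := by
    funext i
    have : aeval (lam i) P = (aeval lam P) i :=
      aeval_algHom_apply (Pi.evalAlgHom ℝ (fun _ => ℝ) i) lam P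
    rw [← this, aeval_def, eval₂_eq_eval_map, Polynomial.map_prod]
    have : (Polynomial.map (algebraMap ℝ ℝ) P).eval (lam i) = 0 := by
      rw [Polynomial.map_prod]
      rw [eval_prod]
      refine Finset.prod_eq_zero (Finset.mem_image_of_mem lam (Finset.mem_univ i)) ?_
      simp
    simpa using this
  have hDP : aeval (Matrix.diagonal lam) P = 0 := by
    have h1 : Matrix.diagonal lam = Matrix.diagonalAlgHom (n := Fin N) (α := ℝ) ℝ lam := rfl
    rw [h1, aeval_algHom_apply, hlamP, map_zero]
  have hAP : aeval A P = 0 := by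
    rw [hAψ, aeval_algHom_apply, hDP, map_zero]
  have hdvd := minpoly.dvd ℝ A hAP
  calc (minpoly ℝ A).natDegree ≤ P.natDegree := natDegree_le_of_dvd hdvd hPne
    _ = S.card := hPdeg

theorem sum_enum {n : ℕ} {T : Finset ℝ} (hc : T.card = n) {lh : Fin n → ℝ}
    (hinj : Function.Injective lh) (hmem : ∀ i, lh i ∈ T) :
    ∑ i : Fin n, ∏ j ∈ Finset.univ.erase i, |lh j| / |lh j - lh i| = Wfn T := by
  have himg : Finset.image lh Finset.univ = T := by
    apply Finset.eq_of_subset_of_card_le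
    · intro x hx; obtain ⟨i, _, rfl⟩ := Finset.mem_image.mp hx; exact hmem i
    · rw [Finset.card_image_of_injective _ hinj, Finset.card_univ, Fintype.card_fin, hc]
  rw [Wfn, ← himg, Finset.sum_image (fun a _ b _ h => hinj h)]
  refine Finset.sum_congr rfl fun i _ => ?_
  rw [← Finset.image_erase hinj, Finset.prod_image (fun a _ b _ h => hinj h)]

theorem stmt_5 {N : ℕ} (A Q : Matrix (Fin N) (Fin N) ℝ) (lam : Fin N → ℝ)
    (hlam : ∀ i, 0 < lam i) (hQ : Qᵀ * Q = 1)
    (hAQ : A = Q * Matrix.diagonal lam * Qᵀ)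
    (k : ℕ) (hk1 : 1 ≤ k) (hk2 : k ≤ (minpoly ℝ A).natDegree - 1) :
    ∃ lh : Fin (k + 1) → ℝ, Function.Injective lh ∧ (∀ i, lh i ∈ Set.range lam) ∧
      sInf {t | ∃ p : Polynomial ℝ, p.natDegree ≤ k ∧ p.eval 0 = 1 ∧
          t = ⨆ j, |p.eval (lam j)|} =
        (∑ i : Fin (k + 1), ∏ j ∈ Finset.univ.erase i, |lh j| / |lh j - lh i|)⁻¹ := by
  classical
  have hmd := minpoly_deg_le A Q lam hQ hAQ
  have hk : k + 1 ≤ (Finset.image lam Finset.univ).card := by omega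
  have hSpos : ∀ y ∈ Finset.image lam Finset.univ, 0 < y := by
    intro y hy
    obtain ⟨i, _, rfl⟩ := Finset.mem_image.mp hy
    exact hlam i
  have hne : (Finset.powersetCard (k+1) (Finset.image lam Finset.univ)).Nonempty :=
    Finset.powersetCard_nonempty.mpr hk
  obtain ⟨T, hT, hmin⟩ := Finset.exists_min_image _ Wfn hne
  obtain ⟨hTsub, hTcard⟩ := Finset.mem_powersetCard.mp hT
  have hTpos : ∀ y ∈ T, 0 < y := fun y hy => hSpos y (hTsub hy)
  have hTne : T.Nonempty := Finset.card_pos.mp (by omega)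
  have hW : 0 < Wfn T := Wfn_pos hTne hTpos
  have hE : 0 < (Wfn T)⁻¹ := inv_pos.mpr hW
  have hN : Nonempty (Fin N) := by
    obtain ⟨y, hy⟩ := hTne
    obtain ⟨i, -, -⟩ := Finset.mem_image.mp (hTsub hy)
    exact ⟨i⟩
  have hinjT : Set.InjOn id (T : Set ℝ) := Function.injective_id.injOn
  set p : Polynomial ℝ := Lagrange.interpolate T id (fun x => sgn T x * (Wfn T)⁻¹)
    with hpdef
  have hdeg : p.degree < T.card := Lagrange.degree_interpolate_lt _ hinjT
  have hval : ∀ x ∈ T, p.eval x = sgn T x * (Wfn T)⁻¹ := fun x hx =>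
    Lagrange.eval_interpolate_at_node _ hinjT hx
  have hp0 : p.eval 0 = 1 := by
    rw [lagrange_zero hdeg]
    have hcong : ∀ x ∈ T, p.eval x * cfn T x
        = (Wfn T)⁻¹ * (∏ y ∈ T.erase x, |y| / |y - x|) := by
      intro x hx
      rw [hval x hx, cfn_eq hTpos]
      calc sgn T x * (Wfn T)⁻¹ * (sgn T x * ∏ y ∈ T.erase x, |y| / |y - x|)
          = (sgn T x * sgn T x) * ((Wfn T)⁻¹ * ∏ y ∈ T.erase x, |y| / |y - x|) := by ring
        _ = (Wfn T)⁻¹ * ∏ y ∈ T.erase x, |y| / |y - x| := by rw [sgn_sq, one_mul]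
    rw [Finset.sum_congr rfl hcong, ← Finset.mul_sum]
    exact inv_mul_cancel₀ hW.ne'
  have hnatdeg : p.natDegree ≤ k := by
    by_cases hp : p = 0
    · rw [hp, natDegree_zero]; omega
    · have := (Polynomial.natDegree_lt_iff_degree_lt hp).mpr (by rwa [hTcard] at hdeg)
      omega
  have hmc := main_claim hSpos hT hmin hdeg hp0 hval
  have hbdd : ∀ q : Polynomial ℝ, BddAbove (Set.range fun j => |q.eval (lam j)|) :=
    fun q => Set.Finite.bddAbove (Set.finite_range _)
  have hlower : ∀ t ∈ {t | ∃ q : Polynomial ℝ, q.natDegree ≤ k ∧ q.eval 0 = 1 ∧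
      t = ⨆ j, |q.eval (lam j)|}, (Wfn T)⁻¹ ≤ t := by
    rintro t ⟨q, hq1, hq2, rfl⟩
    have hq0 : q ≠ 0 := fun h => by simp [h] at hq2
    have hqdeg : q.degree < T.card := by
      rw [hTcard]
      calc q.degree ≤ (q.natDegree : WithBot ℕ) := Polynomial.degree_le_natDegree
        _ < ((k + 1 : ℕ) : WithBot ℕ) := by
            exact_mod_cast Nat.lt_succ_of_le hq1
    have hM : ∀ x ∈ T, |q.eval x| ≤ ⨆ j, |q.eval (lam j)| := by
      intro x hx
      obtain ⟨j, -, rfl⟩ := Finset.mem_image.mp (hTsub hx)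
      exact le_ciSup (hbdd q) j
    have hdual := duality hqdeg hq2 hTpos hM
    have hEW : (Wfn T)⁻¹ * Wfn T = 1 := inv_mul_cancel₀ hW.ne'
    nlinarith [hdual, hW]
  have hsup : (⨆ j, |p.eval (lam j)|) = (Wfn T)⁻¹ := by
    apply le_antisymm
    · exact ciSup_le fun j => hmc _ (Finset.mem_image_of_mem lam (Finset.mem_univ j))
    · obtain ⟨x, hx⟩ := hTne
      obtain ⟨j, -, hj⟩ := Finset.mem_image.mp (hTsub hx)
      calc (Wfn T)⁻¹ = |p.eval (lam j)| := by
            rw [hj, hval x hx, abs_mul, sgn_abs, one_mul, abs_of_pos hE]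
        _ ≤ ⨆ j, |p.eval (lam j)| := le_ciSup (hbdd p) j
  have hmemE : (Wfn T)⁻¹ ∈ {t | ∃ q : Polynomial ℝ, q.natDegree ≤ k ∧ q.eval 0 = 1 ∧
      t = ⨆ j, |q.eval (lam j)|} := ⟨p, hnatdeg, hp0, hsup.symm⟩
  refine ⟨fun i => (T.orderIsoOfFin hTcard i : ℝ), ?_, ?_, ?_⟩
  · intro a b h
    exact (T.orderIsoOfFin hTcard).injective (Subtype.ext h)
  · intro i
    obtain ⟨j, -, hj⟩ := Finset.mem_image.mp (hTsub (T.orderIsoOfFin hTcard i).2)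
    exact ⟨j, hj⟩
  · rw [sum_enum hTcard (fun a b h => (T.orderIsoOfFin hTcard).injective (Subtype.ext h))
      (fun i => (T.orderIsoOfFin hTcard i).2)]
    exact le_antisymm (csInf_le ⟨(Wfn T)⁻¹, hlower⟩ hmemE) (le_csInf ⟨_, hmemE⟩ hlower)
end

section
/- Let 0 < λ₁ ≤ λ₂ ≤ … ≤ λ_N be real numbers and set κ = λ_N/λ₁. Then for every k ≥ 0, the min over p ∈ P_k(0) of max over 1 ≤ i ≤ N of |p(λ_i)| is at most 2·((√κ − 1)/(√κ + 1))^k. -/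
open Matrix Polynomial


open Polynomial.Chebyshev

lemma cheb_deg (k : ℕ) : (T ℝ (k : ℤ)).natDegree ≤ k := by
  induction k using Nat.twoStepInduction with
  | zero => simp [T_zero]
  | one => simp [T_one]
  | more n h1 h2 =>
    have : ((n + 2 : ℕ) : ℤ) = (n : ℤ) + 2 := by push_cast; ring
    rw [this, T_add_two]
    refine le_trans (natDegree_sub_le _ _) ?_
    simp only [max_le_iff]
    constructor
    · refine le_trans (natDegree_mul_le) ?_
      have h3 : (2 * X : Polynomial ℝ).natDegree ≤ 1 := by compute_degree
      have : ((n + 1 : ℕ) : ℤ) = (n : ℤ) + 1 := by push_cast; ring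
      rw [← this]
      omega
    · omega

lemma cheb_eval (z : ℝ) (hz : z ≠ 0) (k : ℕ) :
    (T ℝ (k : ℤ)).eval ((z + z⁻¹) / 2) = (z ^ k + z⁻¹ ^ k) / 2 := by
  induction k using Nat.twoStepInduction with
  | zero => simp [T_zero]
  | one => simp [T_one]
  | more n h1 h2 =>
    have hc : ((n + 2 : ℕ) : ℤ) = (n : ℤ) + 2 := by push_cast; ring
    have hc1 : ((n + 1 : ℕ) : ℤ) = (n : ℤ) + 1 := by push_cast; ring
    rw [hc, T_add_two]
    simp only [eval_sub, eval_mul, eval_ofNat, eval_X]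
    rw [← hc1, h2, h1]
    field_simp
    have hzz : z * z⁻¹ = 1 := mul_inv_cancel₀ hz
    linear_combination (z * z⁻¹ ^ n - z⁻¹ * z⁻¹ ^ n) * hzz

lemma cheb_abs (k : ℕ) (x : ℝ) (hx : |x| ≤ 1) : |(T ℝ (k : ℤ)).eval x| ≤ 1 := by
  rw [abs_le] at hx
  have := Polynomial.Chebyshev.T_real_cos (Real.arccos x) (k : ℤ)
  rw [Real.cos_arccos hx.1 hx.2] at this
  rw [this]
  exact Real.abs_cos_le_one _



theorem stmt_6 {N : ℕ} (lam : Fin (N + 1) → ℝ) (hpos : ∀ i, 0 < lam i)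
    (hmono : Monotone lam) (k : ℕ) :
    sInf {t | ∃ p : Polynomial ℝ, p.natDegree ≤ k ∧ p.eval 0 = 1 ∧
        t = ⨆ i, |p.eval (lam i)|} ≤
      2 * ((Real.sqrt (lam (Fin.last N) / lam 0) - 1) /
        (Real.sqrt (lam (Fin.last N) / lam 0) + 1)) ^ k := by
  set a := lam 0 with ha_def
  set b := lam (Fin.last N) with hb_def
  have ha : 0 < a := hpos 0
  have hab : a ≤ b := hmono (Fin.le_last 0)
  have hbdd : BddBelow {t | ∃ p : Polynomial ℝ, p.natDegree ≤ k ∧ p.eval 0 = 1 ∧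
      t = ⨆ i, |p.eval (lam i)|} := by
    refine ⟨0, ?_⟩
    rintro t ⟨p, -, -, rfl⟩
    exact Real.iSup_nonneg fun i => abs_nonneg _
  have hbdda : ∀ p : Polynomial ℝ, BddAbove (Set.range fun i : Fin (N+1) => |p.eval (lam i)|) :=
    fun p => Set.Finite.bddAbove (Set.finite_range _)
  rcases eq_or_lt_of_le hab with heq | hlt
  · -- degenerate case: all eigenvalues equal
    have hs : Real.sqrt (b / a) = 1 := by
      rw [← heq, div_self ha.ne']; exact Real.sqrt_one
    rw [hs]
    have h0 : ((1:ℝ) - 1) / (1 + 1) = 0 := by norm_num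
    rw [h0]
    set p : Polynomial ℝ := (1 - C a⁻¹ * X) ^ k with hp
    have hdeg : p.natDegree ≤ k := by
      refine le_trans (natDegree_pow_le) ?_
      have : (1 - C a⁻¹ * X : Polynomial ℝ).natDegree ≤ 1 := by compute_degree
      calc k * (1 - C a⁻¹ * X : Polynomial ℝ).natDegree ≤ k * 1 := Nat.mul_le_mul_left _ this
        _ = k := by ring
    have heval0 : p.eval 0 = 1 := by simp [hp]
    have hmem : (⨆ i, |p.eval (lam i)|) ∈ {t | ∃ p : Polynomial ℝ, p.natDegree ≤ k ∧
        p.eval 0 = 1 ∧ t = ⨆ i, |p.eval (lam i)|} := ⟨p, hdeg, heval0, rfl⟩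
    refine le_trans (csInf_le hbdd hmem) ?_
    have hall : ∀ i, lam i = a := fun i =>
      le_antisymm (heq ▸ hmono (Fin.le_last i)) (hmono (Fin.zero_le i))
    have hev : ∀ i, |p.eval (lam i)| = (0:ℝ) ^ k := by
      intro i
      rw [hall i, hp]
      simp [inv_mul_cancel₀ ha.ne', abs_pow]
    calc (⨆ i, |p.eval (lam i)|) ≤ (0:ℝ)^k := ciSup_le fun i => (hev i).le
      _ ≤ 2 * (0:ℝ)^k := by have := pow_nonneg (le_refl (0:ℝ)) k; linarith
  · -- main case
    have hba : 0 < b - a := sub_pos.mpr hlt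
    set s := Real.sqrt (b / a) with hs_def
    have hs2 : s ^ 2 = b / a := Real.sq_sqrt (div_nonneg (hpos _).le ha.le)
    have hs1 : 1 < s := by
      rw [show (1:ℝ) = Real.sqrt 1 from Real.sqrt_one.symm]
      exact Real.sqrt_lt_sqrt zero_le_one ((one_lt_div ha).mpr hlt)
    set z : ℝ := (s + 1) / (s - 1) with hz_def
    have hsm : 0 < s - 1 := by linarith
    have hz1 : 1 < z := (one_lt_div hsm).mpr (by linarith)
    have hz0 : 0 < z := by linarith
    have hc : (b + a) / (b - a) = (z + z⁻¹) / 2 := by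
      have hs2' : s ^ 2 * a = b := by rw [hs2, div_mul_cancel₀ b ha.ne']
      rw [hz_def, inv_div]
      field_simp
      ring_nf
      nlinarith [hs2']
    set L : Polynomial ℝ := C ((b + a) / (b - a)) - C (2 / (b - a)) * X with hL
    have hLdeg : L.natDegree ≤ 1 := by
      show (C ((b + a) / (b - a)) - C (2 / (b - a)) * X : Polynomial ℝ).natDegree ≤ 1
      compute_degree
    have hLev : ∀ x : ℝ, L.eval x = (b + a - 2 * x) / (b - a) := by
      intro x; simp [hL]; ring
    set M : ℝ := (z ^ k + z⁻¹ ^ k) / 2 with hM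
    have hMz : z ^ k / 2 ≤ M := by
      rw [hM]
      have : 0 ≤ z⁻¹ ^ k := by positivity
      linarith
    have hM0 : 0 < M := lt_of_lt_of_le (by positivity) hMz
    set p : Polynomial ℝ := C M⁻¹ * ((T ℝ (k : ℤ)).comp L) with hp
    have hdeg : p.natDegree ≤ k := by
      refine le_trans (natDegree_C_mul_le _ _) ?_
      refine le_trans (natDegree_comp_le) ?_
      calc (T ℝ (k:ℤ)).natDegree * L.natDegree ≤ k * 1 :=
        Nat.mul_le_mul (cheb_deg k) hLdeg
        _ = k := by ring
    have hqev : ∀ x : ℝ, p.eval x = M⁻¹ * (T ℝ (k:ℤ)).eval (L.eval x) := by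
      intro x; simp [hp]
    have heval0 : p.eval 0 = 1 := by
      rw [hqev, hLev]
      simp only [mul_zero, sub_zero]
      rw [hc, cheb_eval z hz0.ne' k, ← hM, inv_mul_cancel₀ hM0.ne']
    have hmem : (⨆ i, |p.eval (lam i)|) ∈ {t | ∃ p : Polynomial ℝ, p.natDegree ≤ k ∧
        p.eval 0 = 1 ∧ t = ⨆ i, |p.eval (lam i)|} := ⟨p, hdeg, heval0, rfl⟩
    refine le_trans (csInf_le hbdd hmem) ?_
    have hrhs : (s - 1) / (s + 1) = z⁻¹ := by rw [hz_def, inv_div]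
    rw [hrhs]
    have hbound : ∀ i, |p.eval (lam i)| ≤ 2 * z⁻¹ ^ k := by
      intro i
      have h1 : a ≤ lam i := hmono (Fin.zero_le i)
      have h2 : lam i ≤ b := hmono (Fin.le_last i)
      have hu : |L.eval (lam i)| ≤ 1 := by
        rw [hLev, abs_le]
        constructor
        · rw [le_div_iff₀ hba]; linarith
        · rw [div_le_one hba]; linarith
      rw [hqev, abs_mul, abs_of_pos (inv_pos.mpr hM0)]
      calc M⁻¹ * |(T ℝ (k:ℤ)).eval (L.eval (lam i))| ≤ M⁻¹ * 1 :=
        mul_le_mul_of_nonneg_left (cheb_abs k _ hu) (by positivity)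
        _ = M⁻¹ := mul_one _
        _ ≤ (z ^ k / 2)⁻¹ := by
            exact inv_anti₀ (by positivity) hMz
        _ = 2 * z⁻¹ ^ k := by rw [inv_div, inv_pow]; ring
    exact ciSup_le hbound
end

section
/- Let A be an N×N real symmetric positive definite matrix with smallest eigenvalue λ₁ and largest eigenvalue λ_N, and set κ(A) = λ_N/λ₁. Let b ∈ ℝ^N, x = A⁻¹b, x₀ ∈ ℝ^N with x₀ ≠ x, and r₀ = b − Ax₀. Then for every k, the minimum over z ∈ x₀ + K_k(A,r₀) of ‖x − z‖_A is at most 2·((√κ(A) − 1)/(√κ(A) + 1))^k · ‖x − x₀‖_A. -/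
open Matrix Polynomial

section aux
variable {N : ℕ}

lemma dot_U (U : Matrix (Fin N) (Fin N) ℝ) (hU' : Uᵀ * U = 1) (g h : Fin N → ℝ) :
    (U *ᵥ g) ⬝ᵥ (U *ᵥ h) = g ⬝ᵥ h := by
  rw [Matrix.dotProduct_mulVec, ← Matrix.mulVec_transpose, Matrix.mulVec_mulVec, hU',
    Matrix.one_mulVec]

lemma conj_mulVec (U : Matrix (Fin N) (Fin N) ℝ) (hU' : Uᵀ * U = 1)
    (d : Fin N → ℝ) (g : Fin N → ℝ) :
    (U * Matrix.diagonal d * Uᵀ) *ᵥ (U *ᵥ g) = U *ᵥ (fun i => d i * g i) := by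
  have e1 : Uᵀ *ᵥ (U *ᵥ g) = g := by
    rw [Matrix.mulVec_mulVec, hU', Matrix.one_mulVec]
  have e2 : Matrix.diagonal d *ᵥ g = fun i => d i * g i := by
    ext i; simp [Matrix.mulVec_diagonal]
  rw [← Matrix.mulVec_mulVec, ← Matrix.mulVec_mulVec, e1, e2]

lemma quad_form_eq (U : Matrix (Fin N) (Fin N) ℝ) (hU' : Uᵀ * U = 1)
    (d : Fin N → ℝ) (g : Fin N → ℝ) :
    (U *ᵥ g) ⬝ᵥ ((U * Matrix.diagonal d * Uᵀ) *ᵥ (U *ᵥ g)) = ∑ i, d i * g i ^ 2 := by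
  rw [conj_mulVec U hU', dot_U U hU']
  simp only [dotProduct]
  congr 1
  funext i
  ring

lemma diag_smul (a : ℝ) (f : Fin N → ℝ) :
    a • Matrix.diagonal f = Matrix.diagonal (fun i => a * f i) := by
  rw [← Matrix.diagonal_smul]; rfl

lemma aeval_conj (U : Matrix (Fin N) (Fin N) ℝ) (hU : U * Uᵀ = 1) (hU' : Uᵀ * U = 1)
    (d : Fin N → ℝ) (p : ℝ[X]) :
    aeval (U * Matrix.diagonal d * Uᵀ) p
      = U * Matrix.diagonal (fun i => p.eval (d i)) * Uᵀ := by
  induction p using Polynomial.induction_on' with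
  | add f g hf hg =>
      rw [map_add, hf, hg]
      have h1 : (Matrix.diagonal fun i => (f + g).eval (d i))
          = Matrix.diagonal (fun i => f.eval (d i)) + Matrix.diagonal (fun i => g.eval (d i)) := by
        rw [Matrix.diagonal_add]
        congr 1
        funext i
        simp [eval_add]
      rw [h1, Matrix.mul_add, Matrix.add_mul]
  | monomial n a =>
      have hpow : ∀ n : ℕ, (U * Matrix.diagonal d * Uᵀ) ^ n
          = U * Matrix.diagonal (fun i => d i ^ n) * Uᵀ := by
        intro n
        induction n with
        | zero =>
            simp only [pow_zero]
            rw [show (Matrix.diagonal fun _ : Fin N => (1:ℝ)) = 1 from Matrix.diagonal_one,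
              Matrix.mul_one, hU]
        | succ n ih =>
            rw [pow_succ, ih]
            calc U * Matrix.diagonal (fun i => d i ^ n) * Uᵀ * (U * Matrix.diagonal d * Uᵀ)
                = U * (Matrix.diagonal (fun i => d i ^ n) * (Uᵀ * U) * Matrix.diagonal d) * Uᵀ := by
                  simp only [Matrix.mul_assoc]
              _ = U * Matrix.diagonal (fun i => d i ^ (n+1)) * Uᵀ := by
                  rw [hU', Matrix.mul_one, Matrix.diagonal_mul_diagonal]
                  simp only [Matrix.mul_assoc, pow_succ]
      rw [aeval_monomial, hpow, ← Algebra.smul_def, ← smul_mul_assoc, ← mul_smul_comm,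
        diag_smul]
      congr 2
      funext i
      simp [eval_monomial]

lemma key_bound (A : Matrix (Fin N) (Fin N) ℝ) (hA : A.PosDef) (p : ℝ[X]) (C : ℝ) (hC : 0 ≤ C)
    (hpC : ∀ μ ∈ spectrum ℝ A, |p.eval μ| ≤ C) (w : Fin N → ℝ) :
    Anorm A ((aeval A p) *ᵥ w) ≤ C * Anorm A w := by
  set U : Matrix (Fin N) (Fin N) ℝ := (hA.1.eigenvectorUnitary : Matrix (Fin N) (Fin N) ℝ)
    with hUdef
  set d : Fin N → ℝ := hA.1.eigenvalues with hddef
  have hU : U * Uᵀ = 1 := by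
    have := (Matrix.mem_unitaryGroup_iff).mp (hA.1.eigenvectorUnitary).2
    simpa [Matrix.star_eq_conjTranspose] using this
  have hU' : Uᵀ * U = 1 := by
    have := (Matrix.mem_unitaryGroup_iff').mp (hA.1.eigenvectorUnitary).2
    simpa [Matrix.star_eq_conjTranspose] using this
  have hspec : A = U * Matrix.diagonal d * Uᵀ := by
    have := hA.1.spectral_theorem
    simpa [Matrix.star_eq_conjTranspose, Matrix.conjTranspose_eq_transpose_of_trivial] using this
  set c : Fin N → ℝ := Uᵀ *ᵥ w with hcdef
  have hw : w = U *ᵥ c := by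
    rw [hcdef, Matrix.mulVec_mulVec, hU, Matrix.one_mulVec]
  have haev : aeval A p = U * Matrix.diagonal (fun i => p.eval (d i)) * Uᵀ := by
    rw [hspec] ; exact aeval_conj U hU hU' d p
  have hv : (aeval A p) *ᵥ w = U *ᵥ (fun i => p.eval (d i) * c i) := by
    rw [haev, hw, conj_mulVec U hU']
  have hq1 : ((aeval A p) *ᵥ w) ⬝ᵥ A *ᵥ ((aeval A p) *ᵥ w)
      = ∑ i, d i * (p.eval (d i) * c i) ^ 2 := by
    rw [hv, hspec]; exact quad_form_eq U hU' d _
  have hq2 : w ⬝ᵥ A *ᵥ w = ∑ i, d i * c i ^ 2 := by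
    rw [hw, hspec]; exact quad_form_eq U hU' d _
  have hsum : ∑ i, d i * (p.eval (d i) * c i) ^ 2 ≤ C ^ 2 * ∑ i, d i * c i ^ 2 := by
    rw [Finset.mul_sum]
    apply Finset.sum_le_sum
    intro i _
    have hdi : 0 < d i := hA.eigenvalues_pos i
    have hmem : d i ∈ spectrum ℝ A := hA.1.eigenvalues_mem_spectrum_real i
    have hb := hpC (d i) hmem
    have h2 : (p.eval (d i)) ^ 2 ≤ C ^ 2 := by
      rw [← sq_abs]
      exact pow_le_pow_left₀ (abs_nonneg _) hb 2
    calc d i * (p.eval (d i) * c i) ^ 2 = d i * ((p.eval (d i)) ^ 2 * c i ^ 2) := by ring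
      _ ≤ d i * (C ^ 2 * c i ^ 2) := by
          apply mul_le_mul_of_nonneg_left _ hdi.le
          exact mul_le_mul_of_nonneg_right h2 (sq_nonneg _)
      _ = C ^ 2 * (d i * c i ^ 2) := by ring
  rw [Anorm, Anorm, hq1, hq2]
  calc Real.sqrt (∑ i, d i * (p.eval (d i) * c i) ^ 2)
      ≤ Real.sqrt (C ^ 2 * ∑ i, d i * c i ^ 2) := Real.sqrt_le_sqrt hsum
    _ = C * Real.sqrt (∑ i, d i * c i ^ 2) := by
        rw [Real.sqrt_mul (sq_nonneg C), Real.sqrt_sq hC]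

lemma krylov_mem (A : Matrix (Fin N) (Fin N) ℝ) (r : Fin N → ℝ) (k : ℕ) (s : ℝ[X])
    (hs : s = 0 ∨ s.natDegree < k) : (aeval A s) *ᵥ r ∈ krylov A r k := by
  rcases hs with rfl | hs
  · simp [Matrix.zero_mulVec]  -- aeval 0 = 0
  · have h : aeval A s = ∑ i ∈ Finset.range k, s.coeff i • A ^ i :=
      Polynomial.aeval_eq_sum_range' hs A
    rw [h]
    have : (∑ i ∈ Finset.range k, s.coeff i • A ^ i) *ᵥ r
        = ∑ i ∈ Finset.range k, s.coeff i • ((A ^ i) *ᵥ r) := by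
      induction (Finset.range k) using Finset.induction_on with
      | empty => simp [Matrix.zero_mulVec]
      | insert _ _ h' ih =>
          rw [Finset.sum_insert h', Finset.sum_insert h', Matrix.add_mulVec, ih,
            Matrix.smul_mulVec]
    rw [this]
    apply Submodule.sum_mem
    intro i hi
    apply Submodule.smul_mem
    apply Submodule.subset_span
    exact ⟨i, Finset.mem_range.mp hi, rfl⟩


lemma natDegree_T_le : ∀ k : ℕ, (Polynomial.Chebyshev.T ℝ (k : ℤ)).natDegree ≤ k := by
  intro k
  induction k using Nat.strong_induction_on with
  | _ k ih =>
    match k with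
    | 0 => simp [Polynomial.Chebyshev.T_zero]
    | 1 => simpa [Polynomial.Chebyshev.T_one] using Polynomial.natDegree_X_le
    | (n+2) =>
      have h := Polynomial.Chebyshev.T_add_two ℝ (n : ℤ)
      rw [show ((n+2 : ℕ) : ℤ) = (n : ℤ) + 2 by push_cast; ring, h]
      apply le_trans (Polynomial.natDegree_sub_le _ _)
      apply max_le
      · apply le_trans (Polynomial.natDegree_mul_le)
        have h1 : (2 * Polynomial.X : ℝ[X]).natDegree ≤ 1 := by
          apply le_trans (Polynomial.natDegree_mul_le)
          simp
        have h2 := ih (n+1) (by omega)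
        rw [show ((n:ℤ)+1) = ((n+1 : ℕ) : ℤ) by push_cast; ring]
        omega
      · exact le_trans (ih n (by omega)) (by omega)

lemma T_abs_le (n : ℤ) (y : ℝ) (h : |y| ≤ 1) :
    |(Polynomial.Chebyshev.T ℝ n).eval y| ≤ 1 := by
  obtain ⟨h1, h2⟩ := abs_le.mp h
  rw [show y = Real.cos (Real.arccos y) from (Real.cos_arccos h1 h2).symm,
    Polynomial.Chebyshev.T_real_cos]
  exact Real.abs_cos_le_one _

lemma T_cosh (n : ℤ) (t : ℝ) :
    (Polynomial.Chebyshev.T ℝ n).eval (Real.cosh t) = Real.cosh (n * t) := by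
  have h := Polynomial.Chebyshev.T_complex_cos (t * Complex.I) n
  rw [Complex.cos_mul_I] at h
  have h2 : (n : ℂ) * (t * Complex.I) = ((n * t : ℝ) : ℂ) * Complex.I := by push_cast; ring
  rw [h2, Complex.cos_mul_I, ← Complex.ofReal_cosh, ← Complex.ofReal_cosh,
    ← Polynomial.Chebyshev.complex_ofReal_eval_T] at h
  exact_mod_cast h

lemma T_ge (k : ℕ) (u : ℝ) (hu : 1 < u) :
    u ^ k / 2 ≤ (Polynomial.Chebyshev.T ℝ (k : ℤ)).eval ((u + u⁻¹) / 2) := by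
  have hu0 : 0 < u := lt_trans one_pos hu
  set t := Real.log u with ht
  have hc : (u + u⁻¹)/2 = Real.cosh t := by
    rw [Real.cosh_eq, Real.exp_neg, Real.exp_log hu0]
  rw [hc, T_cosh]
  have hexp : Real.exp ((k : ℝ) * t) = u ^ k := by
    rw [Real.exp_nat_mul, Real.exp_log hu0]
  have : ((k : ℤ) : ℝ) * t = (k : ℝ) * t := by push_cast; ring
  rw [this, Real.cosh_eq, hexp]
  have := Real.exp_pos (-((k:ℝ) * t))
  linarith

lemma poly_step (A : Matrix (Fin N) (Fin N) ℝ) (hA : A.PosDef) (x₀ x r₀ : Fin N → ℝ)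
    (hr : r₀ = A *ᵥ (x - x₀)) (k : ℕ) (p : ℝ[X]) (hp0 : p.eval 0 = 1)
    (hdeg : p.natDegree ≤ k) (C : ℝ) (hC : 0 ≤ C)
    (hpC : ∀ μ ∈ spectrum ℝ A, |p.eval μ| ≤ C) :
    ∃ v ∈ krylov A r₀ k, Anorm A (x - (x₀ + v)) ≤ C * Anorm A (x - x₀) := by
  have hdvd : X ∣ (1 - p) := by
    rw [Polynomial.X_dvd_iff]
    simp [Polynomial.coeff_sub, ← Polynomial.coeff_zero_eq_eval_zero, hp0,
      Polynomial.coeff_zero_eq_eval_zero]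
  obtain ⟨s, hs⟩ := hdvd
  refine ⟨(aeval A s) *ᵥ r₀, krylov_mem A r₀ k s ?_, ?_⟩
  · by_cases h0 : s = 0
    · exact Or.inl h0
    · right
      have h1 : (X * s : ℝ[X]).natDegree = s.natDegree + 1 := Polynomial.natDegree_X_mul h0
      have h2 : (1 - p : ℝ[X]).natDegree ≤ k := by
        apply le_trans (Polynomial.natDegree_sub_le _ _)
        simp [hdeg]
      rw [← hs] at h1
      omega
  · have hx : x - (x₀ + (aeval A s) *ᵥ r₀) = (aeval A p) *ᵥ (x - x₀) := by
      have hp : p = 1 - s * X := by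
        have : (1 : ℝ[X]) - p = s * X := by rw [hs]; ring
        linear_combination -this
      have haev : aeval A p = 1 - aeval A s * A := by
        rw [hp, map_sub, _root_.map_one, _root_.map_mul, Polynomial.aeval_X]
      rw [haev, hr, Matrix.sub_mulVec, Matrix.one_mulVec, ← Matrix.mulVec_mulVec]
      abel
    rw [hx]
    exact key_bound A hA p C hC hpC (x - x₀)

end aux

theorem stmt_7 {N : ℕ} (A : Matrix (Fin N) (Fin N) ℝ) (hA : A.PosDef)
    (lmin lmax : ℝ)
    (hmin : lmin ∈ spectrum ℝ A ∧ ∀ μ ∈ spectrum ℝ A, lmin ≤ μ)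
    (hmax : lmax ∈ spectrum ℝ A ∧ ∀ μ ∈ spectrum ℝ A, μ ≤ lmax)
    (b x₀ x : Fin N → ℝ) (hx : x = A⁻¹ *ᵥ b) (hx₀ : x₀ ≠ x)
    (r₀ : Fin N → ℝ) (hr₀ : r₀ = b - A *ᵥ x₀) (k : ℕ) :
    sInf {t | ∃ z : Fin N → ℝ, (∃ v ∈ krylov A r₀ k, z = x₀ + v) ∧ t = Anorm A (x - z)} ≤
      2 * ((Real.sqrt (lmax / lmin) - 1) / (Real.sqrt (lmax / lmin) + 1)) ^ k *
        Anorm A (x - x₀) := by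
  classical
  set S := {t | ∃ z : Fin N → ℝ, (∃ v ∈ krylov A r₀ k, z = x₀ + v) ∧ t = Anorm A (x - z)}
    with hS
  have hbdd : BddBelow S := by
    refine ⟨0, fun t ht => ?_⟩
    obtain ⟨z, _, rfl⟩ := ht
    exact Real.sqrt_nonneg _
  have hmemS : ∀ v ∈ krylov A r₀ k, Anorm A (x - (x₀ + v)) ∈ S :=
    fun v hv => ⟨x₀ + v, ⟨v, hv, rfl⟩, rfl⟩
  -- A x = b and r₀ = A (x - x₀)
  have hdet : IsUnit A.det := hA.det_pos.ne'.isUnit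
  have hAx : A *ᵥ x = b := by
    rw [hx, Matrix.mulVec_mulVec, Matrix.mul_nonsing_inv A hdet, Matrix.one_mulVec]
  have hr : r₀ = A *ᵥ (x - x₀) := by
    rw [hr₀, Matrix.mulVec_sub, hAx]
  -- positivity of lmin
  have hlmin_pos : 0 < lmin := by
    have hsp : spectrum ℝ A = Set.range hA.1.eigenvalues :=
      Matrix.IsHermitian.spectrum_real_eq_range_eigenvalues hA.1
    obtain ⟨i, hi⟩ := hsp ▸ hmin.1
    rw [← hi]
    exact hA.eigenvalues_pos i
  have hle : lmin ≤ lmax := hmin.2 lmax hmax.1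
  have hAnn : 0 ≤ Anorm A (x - x₀) := Real.sqrt_nonneg _
  rcases lt_or_eq_of_le hle with hlt | heq
  · -- lmin < lmax : Chebyshev polynomial argument
    set sκ := Real.sqrt (lmax / lmin) with hsκ
    have hκ : 1 < lmax / lmin := (one_lt_div hlmin_pos).mpr hlt
    have hsκ1 : 1 < sκ := by
      rw [hsκ, show (1:ℝ) = Real.sqrt 1 from (Real.sqrt_one).symm]
      exact Real.sqrt_lt_sqrt (by norm_num) hκ
    have hsκsq : sκ ^ 2 = lmax / lmin := Real.sq_sqrt (by positivity)
    set u := (sκ + 1) / (sκ - 1) with hu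
    have hu1 : 1 < u := (one_lt_div (by linarith)).mpr (by linarith)
    have hu0 : 0 < u := lt_trans one_pos hu1
    have huinv : u⁻¹ = (sκ - 1) / (sκ + 1) := by rw [hu, inv_div]
    set γ := (u + u⁻¹) / 2 with hγ
    have hγ_eq : γ = (lmax + lmin) / (lmax - lmin) := by
      rw [hγ, hu, inv_div]
      have h1 : sκ - 1 ≠ 0 := by linarith
      have h2 : sκ + 1 ≠ 0 := by linarith
      have h3 : lmax - lmin ≠ 0 := by linarith
      have h4 : lmin ≠ 0 := hlmin_pos.ne'
      field_simp
      have : sκ ^ 2 * lmin = lmax := by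
        rw [hsκsq]; field_simp
      nlinarith [this]
    set τ := (Polynomial.Chebyshev.T ℝ (k : ℤ)).eval γ with hτ
    have hτ_ge : u ^ k / 2 ≤ τ := T_ge k u hu1
    have hτ_pos : 0 < τ := lt_of_lt_of_le (by positivity) hτ_ge
    set σ : ℝ[X] := Polynomial.C (-2 / (lmax - lmin)) * Polynomial.X + Polynomial.C γ
      with hσ
    have hσeval : ∀ μ : ℝ, σ.eval μ = (lmax + lmin - 2 * μ) / (lmax - lmin) := by
      intro μ
      rw [hσ]
      simp [hγ_eq]
      field_simp
      ring
    set p : ℝ[X] := Polynomial.C τ⁻¹ * ((Polynomial.Chebyshev.T ℝ (k : ℤ)).comp σ) with hp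
    have hp0 : p.eval 0 = 1 := by
      rw [hp]
      simp only [Polynomial.eval_mul, Polynomial.eval_C, Polynomial.eval_comp]
      have : σ.eval 0 = γ := by rw [hσeval, hγ_eq]; ring_nf
      rw [this, ← hτ]
      exact inv_mul_cancel₀ hτ_pos.ne'
    have hdeg : p.natDegree ≤ k := by
      rw [hp]
      apply le_trans (Polynomial.natDegree_C_mul_le _ _)
      rw [Polynomial.natDegree_comp]
      have hσdeg : σ.natDegree ≤ 1 := by
        apply le_trans (Polynomial.natDegree_add_le _ _)
        simp only [Polynomial.natDegree_C, max_le_iff]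
        constructor
        · exact le_trans (Polynomial.natDegree_C_mul_le _ _) Polynomial.natDegree_X_le
        · omega
      calc (Polynomial.Chebyshev.T ℝ (k:ℤ)).natDegree * σ.natDegree
          ≤ k * 1 := Nat.mul_le_mul (natDegree_T_le k) hσdeg
        _ = k := by omega
    have hpC : ∀ μ ∈ spectrum ℝ A, |p.eval μ| ≤ 2 * ((sκ - 1)/(sκ + 1)) ^ k := by
      intro μ hμ
      have hμ1 : lmin ≤ μ := hmin.2 μ hμ
      have hμ2 : μ ≤ lmax := hmax.2 μ hμ
      have hd : (0:ℝ) < lmax - lmin := by linarith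
      have hy : |σ.eval μ| ≤ 1 := by
        rw [hσeval, abs_le]
        constructor
        · rw [le_div_iff₀ hd]; linarith
        · rw [div_le_one hd]; linarith
      have hT : |(Polynomial.Chebyshev.T ℝ (k:ℤ)).eval (σ.eval μ)| ≤ 1 := T_abs_le _ _ hy
      rw [hp]
      simp only [Polynomial.eval_mul, Polynomial.eval_C, Polynomial.eval_comp, abs_mul]
      have h1 : |τ⁻¹| = τ⁻¹ := abs_of_pos (inv_pos.mpr hτ_pos)
      rw [h1]
      calc τ⁻¹ * |(Polynomial.Chebyshev.T ℝ (k:ℤ)).eval (σ.eval μ)|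
          ≤ τ⁻¹ * 1 := by
            apply mul_le_mul_of_nonneg_left hT (inv_pos.mpr hτ_pos).le
        _ = τ⁻¹ := mul_one _
        _ ≤ (u ^ k / 2)⁻¹ := by
            apply inv_anti₀ (by positivity) hτ_ge
        _ = 2 * ((sκ - 1)/(sκ + 1)) ^ k := by
            rw [← huinv, inv_div, div_eq_mul_inv, ← inv_pow]
    obtain ⟨v, hv, hbound⟩ := poly_step A hA x₀ x r₀ hr k p hp0 hdeg
      (2 * ((sκ - 1)/(sκ + 1)) ^ k)
      (mul_nonneg (by norm_num) (pow_nonneg (div_nonneg (by linarith) (by linarith)) k)) hpC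
    calc sInf S ≤ Anorm A (x - (x₀ + v)) := csInf_le hbdd (hmemS v hv)
      _ ≤ 2 * ((sκ - 1)/(sκ + 1)) ^ k * Anorm A (x - x₀) := hbound
  · -- lmin = lmax
    have hsqrt1 : Real.sqrt (lmax / lmin) = 1 := by
      rw [← heq, div_self hlmin_pos.ne', Real.sqrt_one]
    rcases Nat.eq_zero_or_pos k with rfl | hk
    · -- k = 0 : use p = 1
      obtain ⟨v, hv, hbound⟩ := poly_step A hA x₀ x r₀ hr 0 1 (by simp) (by simp) 1
        (by norm_num) (fun μ _ => by simp)
      calc sInf S ≤ Anorm A (x - (x₀ + v)) := csInf_le hbdd (hmemS v hv)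
        _ ≤ 1 * Anorm A (x - x₀) := hbound
        _ ≤ 2 * ((Real.sqrt (lmax / lmin) - 1) / (Real.sqrt (lmax / lmin) + 1)) ^ 0 *
            Anorm A (x - x₀) := by
            rw [pow_zero]; linarith
    · -- k ≥ 1 : use p = 1 - lmin⁻¹ X, C = 0
      set p : ℝ[X] := 1 - Polynomial.C lmin⁻¹ * Polynomial.X with hp
      have hp0 : p.eval 0 = 1 := by simp [hp]
      have hdeg : p.natDegree ≤ k := by
        rw [hp]
        apply le_trans (Polynomial.natDegree_sub_le _ _)
        simp only [Polynomial.natDegree_one, max_le_iff]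
        constructor
        · omega
        · exact le_trans (le_trans (Polynomial.natDegree_C_mul_le _ _)
            Polynomial.natDegree_X_le) hk
      have hpC : ∀ μ ∈ spectrum ℝ A, |p.eval μ| ≤ 0 := by
        intro μ hμ
        have h1 : lmin ≤ μ := hmin.2 μ hμ
        have h2 : μ ≤ lmax := hmax.2 μ hμ
        have hμeq : μ = lmin := le_antisymm (heq ▸ h2) h1
        rw [hp, hμeq]
        simp [inv_mul_cancel₀ hlmin_pos.ne']
      obtain ⟨v, hv, hbound⟩ := poly_step A hA x₀ x r₀ hr k p hp0 hdeg 0 le_rfl hpC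
      have hRHS : 2 * ((Real.sqrt (lmax / lmin) - 1) / (Real.sqrt (lmax / lmin) + 1)) ^ k *
          Anorm A (x - x₀) = 0 := by
        rw [hsqrt1]
        simp [zero_pow hk.ne']
      rw [hRHS]
      calc sInf S ≤ Anorm A (x - (x₀ + v)) := csInf_le hbdd (hmemS v hv)
        _ ≤ 0 * Anorm A (x - x₀) := hbound
        _ = 0 := by ring
end

section
/- (Meurant, 2020) Let f₀, f₁, …, f_{N−1} be arbitrary positive real numbers and let g₀ > g₁ > … > g_{N−1} > 0 be strictly decreasing positive real numbers. Then there exist a real symmetric positive definite matrix A ∈ ℝ^{N×N} and a right-hand side b ∈ ℝ^N such that, with x = A⁻¹b, x₀ = 0, and x_k the unique minimizer of ‖x − z‖_A over z ∈ K_k(A,b), the CG residual norms and error norms satisfy ‖b − A x_k‖₂ = f_k and ‖x − x_k‖_A = g_k for k = 0, 1, …, N−1, and x_N = x. -/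
open Matrix Polynomial

/-- The Euclidean norm of a vector. -/
noncomputable def enorm {N : ℕ} (v : Fin N → ℝ) : ℝ :=
  Real.sqrt (v ⬝ᵥ v)

namespace CGAux

variable {N : ℕ} (f g : Fin N → ℝ)

/-- `g` squared, extended to `ℕ` by `0`. -/
noncomputable def cs (k : ℕ) : ℝ := if h : k < N then (g ⟨k, h⟩) ^ 2 else 0

/-- `f` extended to `ℕ` by `1`. -/
noncomputable def fs (k : ℕ) : ℝ := if h : k < N then f ⟨k, h⟩ else 1

/-- Successive differences of `cs`. -/
noncomputable def ds (k : ℕ) : ℝ := cs g k - cs g (k + 1)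

/-- Square root of `ds`. -/
noncomputable def sq (k : ℕ) : ℝ := Real.sqrt (ds g k)

/-- The bidiagonal factor. -/
noncomputable def M : Matrix (Fin N) (Fin N) ℝ := fun m j =>
  (if (j : ℕ) = (m : ℕ) then 1 else if (j : ℕ) = (m : ℕ) + 1 then -1 else 0)
    * fs f j / sq g m

/-- The SPD matrix. -/
noncomputable def A : Matrix (Fin N) (Fin N) ℝ := (M f g)ᴴ * M f g

/-- The (scaled) residual vectors. -/
noncomputable def rv (k : ℕ) : Fin N → ℝ := fun i => if (i : ℕ) = k then fs f i else 0

/-- The CG iterates. -/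
noncomputable def y (k : ℕ) : Fin N → ℝ := fun i =>
  if (i : ℕ) < k then (cs g i - cs g k) / fs f i else 0

/-- Intermediate vector `M *ᵥ y k`. -/
noncomputable def z (k : ℕ) : Fin N → ℝ := fun m => if (m : ℕ) < k then sq g m else 0

section facts

variable (hf : ∀ i, 0 < f i) (hg : ∀ i, 0 < g i) (hganti : StrictAnti g)

include hf in
lemma fs_pos (k : ℕ) : 0 < fs f k := by
  unfold fs; split
  · exact hf _
  · norm_num

include hg in
lemma cs_pos {k : ℕ} (h : k < N) : 0 < cs g k := by
  unfold cs; rw [dif_pos h]; exact pow_pos (hg _) 2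

include hg hganti in
lemma ds_pos {k : ℕ} (h : k < N) : 0 < ds g k := by
  unfold ds
  by_cases h' : k + 1 < N
  · unfold cs
    rw [dif_pos h, dif_pos h']
    have hlt : (⟨k, h⟩ : Fin N) < ⟨k + 1, h'⟩ := by
      simp [Fin.lt_def]
    have := hganti hlt
    have h1 := hg (⟨k + 1, h'⟩ : Fin N)
    nlinarith
  · have : cs g (k + 1) = 0 := by unfold cs; rw [dif_neg h']
    rw [this, sub_zero]
    exact cs_pos g hg h

include hg hganti in
lemma sq_pos {k : ℕ} (h : k < N) : 0 < sq g k :=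
  Real.sqrt_pos.mpr (ds_pos g hg hganti h)

include hg hganti in
lemma sq_mul_self {k : ℕ} (h : k < N) : sq g k * sq g k = ds g k :=
  Real.mul_self_sqrt (ds_pos g hg hganti h).le

end facts

/-- Formula for `M *ᵥ v`. -/
lemma M_mulVec (v : Fin N → ℝ) (m : Fin N) :
    (M f g *ᵥ v) m =
      (fs f m * v m -
        (if h : (m : ℕ) + 1 < N then fs f ((m : ℕ) + 1) * v ⟨(m : ℕ) + 1, h⟩ else 0))
        / sq g m := by
  show (∑ j, M f g m j * v j) = _
  by_cases h : (m : ℕ) + 1 < N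
  · set j1 : Fin N := ⟨(m : ℕ) + 1, h⟩ with hj1
    have hmj1 : m ≠ j1 := by
      intro hc
      have : (m : ℕ) = (m : ℕ) + 1 := congrArg Fin.val hc
      omega
    have hsupp : ∀ j ∈ Finset.univ, j ∉ ({m, j1} : Finset (Fin N)) → M f g m j * v j = 0 := by
      intro j _ hj
      simp only [Finset.mem_insert, Finset.mem_singleton] at hj
      push_neg at hj
      obtain ⟨hj1', hj2'⟩ := hj
      have h1 : (j : ℕ) ≠ (m : ℕ) := fun hc => hj1' (Fin.ext hc)
      have h2 : (j : ℕ) ≠ (m : ℕ) + 1 := fun hc => hj2' (Fin.ext hc)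
      unfold M
      rw [if_neg h1, if_neg h2]
      ring
    rw [← Finset.sum_subset (Finset.subset_univ ({m, j1} : Finset (Fin N))) hsupp]
    rw [Finset.sum_pair hmj1]
    have e1 : M f g m m = fs f m / sq g m := by
      unfold M; rw [if_pos rfl]; ring
    have e2 : M f g m j1 = -(fs f ((m : ℕ) + 1)) / sq g m := by
      unfold M
      rw [if_neg (show ¬((j1 : ℕ) = (m : ℕ)) by show ¬((m : ℕ) + 1 = (m : ℕ)); omega),
        if_pos (show (j1 : ℕ) = (m : ℕ) + 1 from rfl)]
      show -1 * fs f ((m : ℕ) + 1) / sq g m = _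
      ring
    rw [e1, e2, dif_pos h]
    ring
  · have hsupp : ∀ j ∈ Finset.univ, j ≠ m → M f g m j * v j = 0 := by
      intro j _ hj
      have h1 : (j : ℕ) ≠ (m : ℕ) := fun hc => hj (Fin.ext hc)
      have h2 : (j : ℕ) ≠ (m : ℕ) + 1 := by
        have := j.2; omega
      unfold M
      rw [if_neg h1, if_neg h2]
      ring
    rw [Finset.sum_eq_single m (fun j _ hj => hsupp j (Finset.mem_univ j) hj)
      (fun hm => absurd (Finset.mem_univ m) hm)]
    have e1 : M f g m m = fs f m / sq g m := by
      unfold M; rw [if_pos rfl]; ring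
    rw [e1, dif_neg h]
    ring

/-- Formula for `(M f g)ᴴ *ᵥ v`. -/
lemma MT_mulVec (v : Fin N → ℝ) (j : Fin N) :
    ((M f g)ᴴ *ᵥ v) j =
      fs f j * v j / sq g j -
        (if 0 < (j : ℕ) then
          fs f j * v ⟨(j : ℕ) - 1, lt_of_le_of_lt (Nat.sub_le _ _) j.2⟩ / sq g ((j : ℕ) - 1)
        else 0) := by
  have hMT : ∀ m : Fin N, ((M f g)ᴴ) j m = M f g m j := by
    intro m; simp [Matrix.conjTranspose_apply]
  show (∑ m, ((M f g)ᴴ) j m * v m) = _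
  by_cases h : 0 < (j : ℕ)
  · set j0 : Fin N := ⟨(j : ℕ) - 1, lt_of_le_of_lt (Nat.sub_le _ _) j.2⟩ with hj0
    have hjj0 : j ≠ j0 := by
      intro hc
      have : (j : ℕ) = (j : ℕ) - 1 := congrArg Fin.val hc
      omega
    have hsupp : ∀ m ∈ Finset.univ, m ∉ ({j, j0} : Finset (Fin N)) →
        ((M f g)ᴴ) j m * v m = 0 := by
      intro m _ hm
      simp only [Finset.mem_insert, Finset.mem_singleton] at hm
      push_neg at hm
      obtain ⟨hm1, hm2⟩ := hm
      have h1 : (j : ℕ) ≠ (m : ℕ) := fun hc => hm1 (Fin.ext hc.symm)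
      have h2 : (j : ℕ) ≠ (m : ℕ) + 1 := by
        intro hc
        apply hm2
        apply Fin.ext
        simp [hj0, hc]
      rw [hMT m]
      unfold M
      rw [if_neg h1, if_neg h2]
      ring
    rw [← Finset.sum_subset (Finset.subset_univ ({j, j0} : Finset (Fin N))) hsupp]
    rw [Finset.sum_pair hjj0]
    have e1 : ((M f g)ᴴ) j j = fs f j / sq g j := by
      rw [hMT j]; unfold M; rw [if_pos rfl]; ring
    have e2 : ((M f g)ᴴ) j j0 = -(fs f j) / sq g ((j : ℕ) - 1) := by
      rw [hMT j0]; unfold M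
      rw [if_neg (show ¬((j : ℕ) = (j0 : ℕ)) by show ¬((j : ℕ) = (j : ℕ) - 1); omega),
        if_pos (show (j : ℕ) = (j0 : ℕ) + 1 by show (j : ℕ) = (j : ℕ) - 1 + 1; omega)]
      show -1 * fs f j / sq g ((j : ℕ) - 1) = _
      ring
    rw [e1, e2, if_pos h]
    ring
  · have hj0 : (j : ℕ) = 0 := by omega
    have hsupp : ∀ m ∈ Finset.univ, m ≠ j → ((M f g)ᴴ) j m * v m = 0 := by
      intro m _ hm
      have h1 : (j : ℕ) ≠ (m : ℕ) := fun hc => hm (Fin.ext hc.symm)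
      have h2 : (j : ℕ) ≠ (m : ℕ) + 1 := by omega
      rw [hMT m]
      unfold M
      rw [if_neg h1, if_neg h2]
      ring
    rw [Finset.sum_eq_single j (fun m _ hm => hsupp m (Finset.mem_univ m) hm)
      (fun hm => absurd (Finset.mem_univ j) hm)]
    have e1 : ((M f g)ᴴ) j j = fs f j / sq g j := by
      rw [hMT j]; unfold M; rw [if_pos rfl]; ring
    rw [e1, if_neg h]
    ring

lemma A_mulVec (v : Fin N → ℝ) : A f g *ᵥ v = (M f g)ᴴ *ᵥ (M f g *ᵥ v) :=
  (Matrix.mulVec_mulVec v (M f g)ᴴ (M f g)).symm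

section main

variable (hf : ∀ i, 0 < f i) (hg : ∀ i, 0 < g i) (hganti : StrictAnti g)

include hf hg hganti in
lemma M_mulVec_y {k : ℕ} (hk : k ≤ N) : M f g *ᵥ y f g k = z g k := by
  funext m
  rw [M_mulVec]
  unfold z
  by_cases hm : (m : ℕ) < k
  · rw [if_pos hm]
    have hfm := fs_pos f hf (m : ℕ)
    have hym : fs f (m : ℕ) * y f g k m = cs g (m : ℕ) - cs g k := by
      unfold y
      rw [if_pos hm]
      field_simp
    rw [hym]
    have hterm : (if h : (m : ℕ) + 1 < N then
        fs f ((m : ℕ) + 1) * y f g k ⟨(m : ℕ) + 1, h⟩ else 0) =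
        if (m : ℕ) + 1 < k then cs g ((m : ℕ) + 1) - cs g k else 0 := by
      by_cases h : (m : ℕ) + 1 < N
      · rw [dif_pos h]
        unfold y
        by_cases h' : (m : ℕ) + 1 < k
        · rw [if_pos h', if_pos h']
          have := fs_pos f hf ((m : ℕ) + 1)
          field_simp
        · rw [if_neg h', if_neg h']
          ring
      · rw [dif_neg h]
        have h' : ¬ ((m : ℕ) + 1 < k) := by omega
        rw [if_neg h']
    rw [hterm]
    by_cases h' : (m : ℕ) + 1 < k
    · rw [if_pos h']
      have : cs g (m : ℕ) - cs g k - (cs g ((m : ℕ) + 1) - cs g k) = ds g (m : ℕ) := by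
        unfold ds; ring
      rw [this]
      unfold sq
      exact Real.div_sqrt
    · rw [if_neg h']
      have hkm : k = (m : ℕ) + 1 := by omega
      have : cs g (m : ℕ) - cs g k - 0 = ds g (m : ℕ) := by
        unfold ds; rw [hkm]; ring
      rw [this]
      unfold sq
      exact Real.div_sqrt
  · rw [if_neg hm]
    have hym : y f g k m = 0 := by
      unfold y; rw [if_neg hm]
    have hterm : (if h : (m : ℕ) + 1 < N then
        fs f ((m : ℕ) + 1) * y f g k ⟨(m : ℕ) + 1, h⟩ else 0) = 0 := by
      by_cases h : (m : ℕ) + 1 < N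
      · rw [dif_pos h]
        unfold y
        have : ¬ ((m : ℕ) + 1 < k) := by omega
        rw [if_neg this]
        ring
      · rw [dif_neg h]
    rw [hym, hterm]
    simp

include hf hg hganti in
lemma MT_mulVec_z {k : ℕ} (hk : k ≤ N) :
    (M f g)ᴴ *ᵥ z g k = rv f 0 - rv f k := by
  funext j
  rw [MT_mulVec]
  have hsqj := sq_pos g hg hganti j.2
  unfold z rv
  simp only [Pi.sub_apply]
  by_cases h : 0 < (j : ℕ)
  · rw [if_pos h]
    have hj1 : ((⟨(j : ℕ) - 1, lt_of_le_of_lt (Nat.sub_le _ _) j.2⟩ : Fin N) : ℕ)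
        = (j : ℕ) - 1 := rfl
    have hsqj0 := sq_pos g hg hganti
      (lt_of_le_of_lt (Nat.sub_le (j : ℕ) 1) j.2)
    have hne0 : ¬ ((j : ℕ) = 0) := by omega
    rw [if_neg hne0]
    by_cases h1 : (j : ℕ) < k
    · have h2 : (j : ℕ) - 1 < k := by omega
      have h3 : ¬ ((j : ℕ) = k) := by omega
      rw [if_pos h1, if_pos h2, if_neg h3]
      field_simp
      ring
    · by_cases h2 : (j : ℕ) = k
      · have h3 : (j : ℕ) - 1 < k := by omega
        rw [if_neg h1, if_pos h3, if_pos h2]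
        field_simp
        ring
      · have h3 : ¬ ((j : ℕ) - 1 < k) := by omega
        rw [if_neg h1, if_neg h3, if_neg h2]
        simp
  · have hj0 : (j : ℕ) = 0 := by omega
    rw [if_neg h, if_pos hj0]
    by_cases h1 : (j : ℕ) < k
    · have h2 : ¬ ((j : ℕ) = k) := by omega
      rw [if_pos h1, if_neg h2]
      field_simp
    · have h2 : (j : ℕ) = k := by omega
      rw [if_neg h1, if_pos h2]
      simp

include hf hg hganti in
lemma A_mulVec_y {k : ℕ} (hk : k ≤ N) :
    A f g *ᵥ y f g k = rv f 0 - rv f k := by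
  rw [A_mulVec, M_mulVec_y f g hf hg hganti hk, MT_mulVec_z f g hf hg hganti hk]

lemma M_mulVec_supp (v : Fin N → ℝ) (k : ℕ) (hv : ∀ i : Fin N, k ≤ (i : ℕ) → v i = 0)
    (m : Fin N) (hm : k ≤ (m : ℕ)) : (M f g *ᵥ v) m = 0 := by
  rw [M_mulVec]
  rw [hv m hm]
  have : (if h : (m : ℕ) + 1 < N then
      fs f ((m : ℕ) + 1) * v ⟨(m : ℕ) + 1, h⟩ else 0) = 0 := by
    by_cases h : (m : ℕ) + 1 < N
    · rw [dif_pos h, hv ⟨(m : ℕ) + 1, h⟩ (by simp; omega)]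
      ring
    · rw [dif_neg h]
  rw [this]
  simp

lemma A_mulVec_supp (v : Fin N → ℝ) (k : ℕ) (hv : ∀ i : Fin N, k ≤ (i : ℕ) → v i = 0)
    (i : Fin N) (hi : k + 1 ≤ (i : ℕ)) : (A f g *ᵥ v) i = 0 := by
  rw [A_mulVec, MT_mulVec]
  have h0 : 0 < (i : ℕ) := by omega
  rw [if_pos h0]
  rw [M_mulVec_supp f g v k hv i (by omega),
      M_mulVec_supp f g v k hv ⟨(i : ℕ) - 1, lt_of_le_of_lt (Nat.sub_le _ _) i.2⟩ (by simp; omega)]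
  simp

include hg hganti in
lemma A_mulVec_diag (v : Fin N → ℝ) (k : ℕ) (hk : k + 1 < N)
    (hv : ∀ i : Fin N, k + 1 ≤ (i : ℕ) → v i = 0) :
    (A f g *ᵥ v) ⟨k + 1, hk⟩ =
      -(fs f (k + 1) * (fs f k * v ⟨k, Nat.lt_of_succ_lt hk⟩) / ds g k) := by
  have hkN : k < N := Nat.lt_of_succ_lt hk
  rw [A_mulVec, MT_mulVec]
  have h0 : 0 < ((⟨k + 1, hk⟩ : Fin N) : ℕ) := by simp
  rw [if_pos h0]
  have hc1 : ((⟨k + 1, hk⟩ : Fin N) : ℕ) = k + 1 := rfl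
  have hz1 : (M f g *ᵥ v) ⟨k + 1, hk⟩ = 0 :=
    M_mulVec_supp f g v (k + 1) hv ⟨k + 1, hk⟩ (by simp)
  have hj0 : (⟨((⟨k + 1, hk⟩ : Fin N) : ℕ) - 1,
      lt_of_le_of_lt (Nat.sub_le _ _) (⟨k + 1, hk⟩ : Fin N).2⟩ : Fin N) = ⟨k, hkN⟩ := by
    apply Fin.ext
    simp
  have hz2 : (M f g *ᵥ v) ⟨k, hkN⟩ = fs f k * v ⟨k, hkN⟩ / sq g k := by
    rw [M_mulVec]
    have : (if h : (k : ℕ) + 1 < N then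
        fs f (k + 1) * v ⟨k + 1, h⟩ else 0) = 0 := by
      rw [dif_pos hk, hv ⟨k + 1, hk⟩ (by simp)]
      ring
    simp only [this]
    congr 1
    ring
  rw [hj0, hz1, hz2]
  simp only [hc1]
  rw [← sq_mul_self g hg hganti hkN]
  have hsq := sq_pos g hg hganti hkN
  field_simp
  simp only [Nat.add_sub_cancel, zero_mul, zero_div, zero_sub]
  field_simp

include hf hg hganti in
lemma powb_spec (k : ℕ) :
    (∀ i : Fin N, k + 1 ≤ (i : ℕ) → ((A f g) ^ k *ᵥ rv f 0) i = 0) ∧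
    (∀ h : k < N, ((A f g) ^ k *ᵥ rv f 0) ⟨k, h⟩ ≠ 0) := by
  induction k with
  | zero =>
    constructor
    · intro i hi
      simp only [pow_zero, Matrix.one_mulVec]
      unfold rv
      rw [if_neg (by omega)]
    · intro h
      simp only [pow_zero, Matrix.one_mulVec]
      unfold rv
      rw [if_pos rfl]
      exact (fs_pos f hf 0).ne'
  | succ k ih =>
    have hpow : (A f g) ^ (k + 1) *ᵥ rv f 0 = A f g *ᵥ ((A f g) ^ k *ᵥ rv f 0) := by
      rw [Matrix.mulVec_mulVec, ← pow_succ']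
    constructor
    · intro i hi
      rw [hpow]
      exact A_mulVec_supp f g _ (k + 1) ih.1 i hi
    · intro h
      rw [hpow]
      rw [A_mulVec_diag f g hg hganti _ k h ih.1]
      have h1 := (fs_pos f hf (k + 1)).ne'
      have h2 := (fs_pos f hf k).ne'
      have h3 := ih.2 (Nat.lt_of_succ_lt h)
      have h4 := (ds_pos g hg hganti (Nat.lt_of_succ_lt h)).ne'
      intro hc
      rw [neg_eq_zero, _root_.div_eq_zero_iff] at hc
      rcases hc with hc | hc
      · rw [mul_eq_zero] at hc
        rcases hc with hc | hc
        · exact h1 hc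
        · rw [mul_eq_zero] at hc
          rcases hc with hc | hc
          · exact h2 hc
          · exact h3 hc
      · exact h4 hc

/-- The coordinate subspace of vectors supported on indices `< k`. -/
def U (k : ℕ) : Submodule ℝ (Fin N → ℝ) where
  carrier := {v | ∀ i : Fin N, k ≤ (i : ℕ) → v i = 0}
  add_mem' := by
    intro a b ha hb
    intro i hi
    simp [ha i hi, hb i hi]
  zero_mem' := by intro i hi; rfl
  smul_mem' := by
    intro c a ha i hi
    simp [ha i hi]

lemma U_mono {k l : ℕ} (h : k ≤ l) : (U k : Submodule ℝ (Fin N → ℝ)) ≤ U l := by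
  intro v hv i hi
  exact hv i (le_trans h hi)

include hf hg hganti in
lemma krylov_le_U (k : ℕ) : krylov (A f g) (rv f 0) k ≤ U k := by
  unfold krylov
  rw [Submodule.span_le]
  rintro v ⟨i, hik, rfl⟩
  refine U_mono (by omega : i + 1 ≤ k) ?_
  exact (powb_spec f g hf hg hganti i).1

lemma krylov_mono {A' : Matrix (Fin N) (Fin N) ℝ} {r : Fin N → ℝ} {k l : ℕ} (h : k ≤ l) :
    krylov A' r k ≤ krylov A' r l := by
  unfold krylov
  apply Submodule.span_mono
  rintro v ⟨i, hik, rfl⟩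
  exact ⟨i, lt_of_lt_of_le hik h, rfl⟩

include hf hg hganti in
lemma U_le_krylov : ∀ k, k ≤ N → (U k : Submodule ℝ (Fin N → ℝ)) ≤ krylov (A f g) (rv f 0) k := by
  intro k
  induction k with
  | zero =>
    intro _ v hv
    have : v = 0 := by
      funext i
      exact hv i (Nat.zero_le _)
    rw [this]
    exact Submodule.zero_mem _
  | succ k ih =>
    intro hk v hv
    have hkN : k < N := hk
    have hkk : k ≤ N := le_of_lt hkN
    set w := (A f g) ^ k *ᵥ rv f 0 with hw
    have hw1 : w ∈ krylov (A f g) (rv f 0) (k + 1) :=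
      Submodule.subset_span ⟨k, Nat.lt_succ_self k, rfl⟩
    have hwk : w ⟨k, hkN⟩ ≠ 0 := (powb_spec f g hf hg hganti k).2 hkN
    have hwsupp : ∀ i : Fin N, k + 1 ≤ (i : ℕ) → w i = 0 :=
      (powb_spec f g hf hg hganti k).1
    set c := v ⟨k, hkN⟩ / w ⟨k, hkN⟩ with hc
    have hress : v - c • w ∈ U k := by
      intro i hi
      by_cases h : k + 1 ≤ (i : ℕ)
      · simp [hv i h, hwsupp i h]
      · have hik : (i : ℕ) = k := by omega
        have : i = ⟨k, hkN⟩ := Fin.ext hik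
        subst this
        simp only [Pi.sub_apply, Pi.smul_apply, smul_eq_mul, hc]
        field_simp
        ring
      
    have h1 : v - c • w ∈ krylov (A f g) (rv f 0) (k + 1) :=
      krylov_mono (Nat.le_succ k) (ih hkk hress)
    have h2 : c • w ∈ krylov (A f g) (rv f 0) (k + 1) :=
      Submodule.smul_mem _ c hw1
    have : v = (v - c • w) + c • w := by ring
    rw [this]
    exact Submodule.add_mem _ h1 h2

end main

end CGAux

theorem stmt_9 {N : ℕ} (hN : 0 < N) (f g : Fin N → ℝ)
    (hf : ∀ i, 0 < f i) (hg : ∀ i, 0 < g i) (hganti : StrictAnti g) :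
    ∃ (A : Matrix (Fin N) (Fin N) ℝ) (b : Fin N → ℝ) (xs : ℕ → Fin N → ℝ),
      A.PosDef ∧
      (∀ k : ℕ, xs k ∈ krylov A b k ∧
        (∀ w ∈ krylov A b k, Anorm A (A⁻¹ *ᵥ b - xs k) ≤ Anorm A (A⁻¹ *ᵥ b - w)) ∧
        (∀ w ∈ krylov A b k,
          Anorm A (A⁻¹ *ᵥ b - w) ≤ Anorm A (A⁻¹ *ᵥ b - xs k) → w = xs k)) ∧
      (∀ k : Fin N, _root_.enorm (b - A *ᵥ xs k) = f k) ∧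
      (∀ k : Fin N, Anorm A (A⁻¹ *ᵥ b - xs k) = g k) ∧
      xs N = A⁻¹ *ᵥ b := by
  classical
  -- injectivity of the bidiagonal factor
  have hMinj : ∀ v : Fin N → ℝ, CGAux.M f g *ᵥ v = 0 → v = 0 := by
    intro v hv
    have key : ∀ t : ℕ, ∀ i : Fin N, N - (i : ℕ) ≤ t → v i = 0 := by
      intro t
      induction t with
      | zero => intro i hi; exfalso; have := i.2; omega
      | succ t ih =>
        intro i _
        have hvi : (CGAux.M f g *ᵥ v) i = 0 := by rw [hv]; rfl
        rw [CGAux.M_mulVec] at hvi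
        have hterm : (if h : (i : ℕ) + 1 < N then
            CGAux.fs f ((i : ℕ) + 1) * v ⟨(i : ℕ) + 1, h⟩ else 0) = 0 := by
          by_cases h : (i : ℕ) + 1 < N
          · rw [dif_pos h, ih ⟨(i : ℕ) + 1, h⟩ (by simp; omega)]; ring
          · rw [dif_neg h]
        rw [hterm, sub_zero] at hvi
        have hsq := (CGAux.sq_pos g hg hganti i.2).ne'
        have hfs := (CGAux.fs_pos f hf (i : ℕ)).ne'
        rw [_root_.div_eq_zero_iff] at hvi
        rcases hvi with hvi | hvi
        · rcases mul_eq_zero.mp hvi with hvi | hvi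
          · exact absurd hvi hfs
          · exact hvi
        · exact absurd hvi hsq
    funext i
    exact key N i (by omega)
  have hherm : (CGAux.A f g).IsHermitian :=
    Matrix.isHermitian_conjTranspose_mul_self (CGAux.M f g)
  have hAT : (CGAux.A f g)ᵀ = CGAux.A f g := by
    ext i j
    rw [Matrix.transpose_apply]
    have h2 := congrFun (congrFun hherm i) j
    simpa [Matrix.conjTranspose_apply] using h2
  have hquad : ∀ v : Fin N → ℝ,
      v ⬝ᵥ (CGAux.A f g *ᵥ v) = (CGAux.M f g *ᵥ v) ⬝ᵥ (CGAux.M f g *ᵥ v) := by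
    intro v
    rw [CGAux.A_mulVec, Matrix.dotProduct_mulVec, Matrix.vecMul_conjTranspose]
    simp
  have hdotnn : ∀ v : Fin N → ℝ, (0 : ℝ) ≤ v ⬝ᵥ v := by
    intro v
    have h1 : v ⬝ᵥ v = ∑ i, v i * v i := rfl
    rw [h1]
    exact Finset.sum_nonneg fun i _ => mul_self_nonneg _
  have hdotpos : ∀ v : Fin N → ℝ, v ≠ 0 → (0 : ℝ) < v ⬝ᵥ v := by
    intro v hv
    obtain ⟨i, hi⟩ := Function.ne_iff.mp hv
    have h1 : v ⬝ᵥ v = ∑ j, v j * v j := rfl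
    rw [h1]
    exact Finset.sum_pos' (fun j _ => mul_self_nonneg _)
      ⟨i, Finset.mem_univ i, mul_self_pos.mpr hi⟩
  have hposdef : (CGAux.A f g).PosDef := by
    refine Matrix.posDef_iff_dotProduct_mulVec.mpr ⟨hherm, fun x hx => ?_⟩
    have hsx : star x = x := by funext i; exact star_trivial _
    rw [hsx, hquad x]
    exact hdotpos _ fun h => hx (hMinj x h)
  have hQnn : ∀ v : Fin N → ℝ, (0 : ℝ) ≤ v ⬝ᵥ (CGAux.A f g *ᵥ v) := by
    intro v; rw [hquad]; exact hdotnn _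
  have hQpos : ∀ v : Fin N → ℝ, v ≠ 0 → (0 : ℝ) < v ⬝ᵥ (CGAux.A f g *ᵥ v) := by
    intro v hv; rw [hquad]; exact hdotpos _ fun h => hv (hMinj v h)
  have hunit : IsUnit (CGAux.A f g).det := hposdef.det_pos.ne'.isUnit
  have hrvN : CGAux.rv f N = (0 : Fin N → ℝ) := by
    funext i
    simp only [CGAux.rv, Pi.zero_apply]
    rw [if_neg (Nat.ne_of_lt i.2)]
  have hAyN : CGAux.A f g *ᵥ CGAux.y f g N = CGAux.rv f 0 := by
    rw [CGAux.A_mulVec_y f g hf hg hganti le_rfl, hrvN, sub_zero]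
  have hxinv : (CGAux.A f g)⁻¹ *ᵥ CGAux.rv f 0 = CGAux.y f g N := by
    rw [← hAyN, Matrix.mulVec_mulVec, Matrix.nonsing_inv_mul _ hunit, Matrix.one_mulVec]
  -- membership of the iterates
  have hmem : ∀ k : ℕ,
      CGAux.y f g (min k N) ∈ krylov (CGAux.A f g) (CGAux.rv f 0) k := by
    intro k
    have h1 : CGAux.y f g (min k N) ∈ CGAux.U (min k N) := by
      intro i hi
      simp only [CGAux.y]
      rw [if_neg (by omega)]
    exact CGAux.krylov_mono (min_le_left k N)
      (CGAux.U_le_krylov f g hf hg hganti (min k N) (min_le_right k N) h1)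
  -- orthogonality of the residual to the Krylov space
  have horth : ∀ k : ℕ, ∀ w ∈ krylov (CGAux.A f g) (CGAux.rv f 0) k,
      CGAux.rv f (min k N) ⬝ᵥ w = 0 := by
    intro k w hw
    have hwU : w ∈ CGAux.U k := CGAux.krylov_le_U f g hf hg hganti k hw
    have h1 : CGAux.rv f (min k N) ⬝ᵥ w = ∑ i, CGAux.rv f (min k N) i * w i := rfl
    rw [h1]
    apply Finset.sum_eq_zero
    intro i _
    by_cases h : (i : ℕ) = min k N
    · have hiN := i.2
      have : w i = 0 := hwU i (by omega)
      rw [this, mul_zero]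
    · simp only [CGAux.rv]
      rw [if_neg h, zero_mul]
  -- residual identity for the iterates
  have hAdv : ∀ m : ℕ, m ≤ N →
      CGAux.A f g *ᵥ (CGAux.y f g N - CGAux.y f g m) = CGAux.rv f m := by
    intro m hm
    rw [Matrix.mulVec_sub, hAyN, CGAux.A_mulVec_y f g hf hg hganti hm, sub_sub_cancel]
  -- quadratic expansion
  have hexp : ∀ k : ℕ, ∀ w ∈ krylov (CGAux.A f g) (CGAux.rv f 0) k,
      (CGAux.y f g N - w) ⬝ᵥ (CGAux.A f g *ᵥ (CGAux.y f g N - w)) =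
        (CGAux.y f g N - CGAux.y f g (min k N)) ⬝ᵥ
          (CGAux.A f g *ᵥ (CGAux.y f g N - CGAux.y f g (min k N))) +
        (CGAux.y f g (min k N) - w) ⬝ᵥ
          (CGAux.A f g *ᵥ (CGAux.y f g (min k N) - w)) := by
    intro k w hw
    set m := min k N with hm
    have hmN : m ≤ N := min_le_right _ _
    have hu : CGAux.y f g m - w ∈ krylov (CGAux.A f g) (CGAux.rv f 0) k :=
      Submodule.sub_mem _ (hmem k) hw
    have ho : CGAux.rv f m ⬝ᵥ (CGAux.y f g m - w) = 0 := horth k _ hu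
    have hsplit : CGAux.y f g N - w =
        (CGAux.y f g N - CGAux.y f g m) + (CGAux.y f g m - w) := by
      rw [sub_add_sub_cancel]
    rw [hsplit, Matrix.mulVec_add, dotProduct_add, add_dotProduct, add_dotProduct]
    have t1 : (CGAux.y f g m - w) ⬝ᵥ
        (CGAux.A f g *ᵥ (CGAux.y f g N - CGAux.y f g m)) = 0 := by
      rw [hAdv m hmN, dotProduct_comm]
      exact ho
    have t2 : (CGAux.y f g N - CGAux.y f g m) ⬝ᵥ
        (CGAux.A f g *ᵥ (CGAux.y f g m - w)) = 0 := by
      rw [Matrix.dotProduct_mulVec]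
      have hvm : (CGAux.y f g N - CGAux.y f g m) ᵥ* CGAux.A f g =
          CGAux.A f g *ᵥ (CGAux.y f g N - CGAux.y f g m) := by
        conv_lhs => rw [← hAT]
        exact Matrix.vecMul_transpose _ _
      rw [hvm, hAdv m hmN]
      exact ho
    rw [t1, t2]
    ring
  refine ⟨CGAux.A f g, CGAux.rv f 0, fun k => CGAux.y f g (min k N),
    hposdef, ?_, ?_, ?_, ?_⟩
  · intro k
    refine ⟨hmem k, ?_, ?_⟩
    · intro w hw
      simp only [Anorm, hxinv]
      apply Real.sqrt_le_sqrt
      have := hexp k w hw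
      have h2 := hQnn (CGAux.y f g (min k N) - w)
      linarith
    · intro w hw hle
      by_contra hne
      have hu0 : CGAux.y f g (min k N) - w ≠ 0 :=
        sub_ne_zero.mpr fun h => hne h.symm
      have hQ2 := hQpos _ hu0
      have heq := hexp k w hw
      have h1 := hQnn (CGAux.y f g N - CGAux.y f g (min k N))
      simp only [Anorm, hxinv] at hle
      have hlt : Real.sqrt ((CGAux.y f g N - CGAux.y f g (min k N)) ⬝ᵥ
            (CGAux.A f g *ᵥ (CGAux.y f g N - CGAux.y f g (min k N)))) <
          Real.sqrt ((CGAux.y f g N - w) ⬝ᵥ (CGAux.A f g *ᵥ (CGAux.y f g N - w))) := by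
        apply Real.sqrt_lt_sqrt h1
        linarith
      linarith
  · intro k
    have hmk : min (k : ℕ) N = (k : ℕ) := min_eq_left k.2.le
    simp only [hmk]
    have h1 : CGAux.A f g *ᵥ CGAux.y f g (k : ℕ) = CGAux.rv f 0 - CGAux.rv f (k : ℕ) :=
      CGAux.A_mulVec_y f g hf hg hganti k.2.le
    rw [h1, sub_sub_cancel]
    have h2 : CGAux.rv f (k : ℕ) ⬝ᵥ CGAux.rv f (k : ℕ) = f k * f k := by
      have h3 : CGAux.rv f (k : ℕ) ⬝ᵥ CGAux.rv f (k : ℕ) =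
          ∑ i, CGAux.rv f (k : ℕ) i * CGAux.rv f (k : ℕ) i := rfl
      rw [h3, Finset.sum_eq_single k ?_ ?_]
      · simp only [CGAux.rv, if_true]
        simp [CGAux.fs]
      · intro i _ hik
        simp only [CGAux.rv]
        rw [if_neg fun hc => hik (Fin.ext hc)]
        ring
      · intro h; exact absurd (Finset.mem_univ k) h
    simp only [_root_.enorm]
    rw [h2]
    exact Real.sqrt_mul_self (hf k).le
  · intro k
    have hmk : min (k : ℕ) N = (k : ℕ) := min_eq_left k.2.le
    simp only [hmk, Anorm, hxinv]
    rw [hAdv (k : ℕ) k.2.le]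
    have h2 : (CGAux.y f g N - CGAux.y f g (k : ℕ)) ⬝ᵥ CGAux.rv f (k : ℕ) = g k ^ 2 := by
      have h3 : (CGAux.y f g N - CGAux.y f g (k : ℕ)) ⬝ᵥ CGAux.rv f (k : ℕ) =
          ∑ i, (CGAux.y f g N - CGAux.y f g (k : ℕ)) i * CGAux.rv f (k : ℕ) i := rfl
      rw [h3, Finset.sum_eq_single k ?_ ?_]
      · have hyk : CGAux.y f g (k : ℕ) k = 0 := by
          simp only [CGAux.y]
          rw [if_neg (lt_irrefl _)]
        have hcsN : CGAux.cs g N = 0 := by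
          simp only [CGAux.cs]
          rw [dif_neg (lt_irrefl N)]
        have hyN : CGAux.y f g N k = CGAux.cs g (k : ℕ) / CGAux.fs f (k : ℕ) := by
          simp only [CGAux.y]
          rw [if_pos k.2, hcsN, sub_zero]
        have hrvk : CGAux.rv f (k : ℕ) k = CGAux.fs f (k : ℕ) := by
          simp only [CGAux.rv, if_true]
        simp only [Pi.sub_apply]
        rw [hyk, hyN, hrvk, sub_zero]
        have hfk := (CGAux.fs_pos f hf (k : ℕ)).ne'
        have hcsk : CGAux.cs g (k : ℕ) = g k ^ 2 := by
          simp [CGAux.cs]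
        field_simp
        rw [hcsk]
      · intro i _ hik
        simp only [CGAux.rv]
        rw [if_neg fun hc => hik (Fin.ext hc)]
        ring
      · intro h; exact absurd (Finset.mem_univ k) h
    rw [h2]
    exact Real.sqrt_sq (hg k).le
  · show CGAux.y f g (min N N) = _
    rw [min_self, hxinv]
end

section
/- (Greenbaum–Strakoš) For every N ≥ 1 there exist a unitary matrix A ∈ ℂ^{N×N} and a unit vector b ∈ ℂ^N such that min over p ∈ P_k(0) of ‖p(A)b‖₂ = 1 for all k = 0, 1, …, N−1; i.e., GMRES can completely stagnate for N−1 steps even for a unitary (hence normal) matrix. -/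
open Matrix Polynomial

/-- The Euclidean norm of a complex vector. -/
noncomputable def cenorm {N : ℕ} (v : Fin N → ℂ) : ℝ :=
  Real.sqrt (∑ i, ‖v i‖ ^ 2)

lemma sum_mulVec_aux {N : ℕ} (s : Finset ℕ) (M : ℕ → Matrix (Fin N) (Fin N) ℂ)
    (v : Fin N → ℂ) : (∑ i ∈ s, M i) *ᵥ v = ∑ i ∈ s, M i *ᵥ v := by
  ext j
  simp only [Matrix.mulVec, dotProduct, Finset.sum_apply, Matrix.sum_apply, Finset.sum_mul]
  rw [Finset.sum_comm]

open scoped Fin.NatCast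

theorem stmt_15 (N : ℕ) (hN : 0 < N) :
    ∃ (A : Matrix (Fin N) (Fin N) ℂ) (b : Fin N → ℂ),
      Aᴴ * A = 1 ∧ cenorm b = 1 ∧
      ∀ k : ℕ, k < N →
        sInf {t | ∃ p : Polynomial ℂ, p.natDegree ≤ k ∧ p.eval 0 = 1 ∧
          t = cenorm ((aeval A p) *ᵥ b)} = 1 := by
  haveI : NeZero N := ⟨hN.ne'⟩
  set A : Matrix (Fin N) (Fin N) ℂ := Matrix.of fun i j => if i = j + 1 then 1 else 0 with hA
  set b : Fin N → ℂ := Pi.single 0 1 with hb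
  have hbnorm : cenorm b = 1 := by
    simp only [cenorm, hb, Pi.single_apply]
    rw [Finset.sum_eq_single (0 : Fin N)]
    · simp
    · intro i _ hi; simp [hi]
    · simp
  have hstep : ∀ j : Fin N, A *ᵥ Pi.single j 1 = Pi.single (j + 1) 1 := by
    intro j
    ext i
    simp only [hA, Matrix.mulVec, dotProduct, Matrix.of_apply, Pi.single_apply, ite_mul,
      one_mul, zero_mul, mul_ite, mul_one, mul_zero]
    rw [Finset.sum_eq_single j]
    · by_cases h : i = j + 1 <;> simp [h, eq_comm]
    · intro c _ hc; simp [hc]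
    · simp
  have hpow : ∀ m : ℕ, (A ^ m) *ᵥ b = Pi.single ((m : Fin N)) 1 := by
    intro m
    induction m with
    | zero => rw [pow_zero, Matrix.one_mulVec, hb]; norm_num
    | succ n ih =>
      rw [pow_succ', ← Matrix.mulVec_mulVec, ih, hstep]
      push_cast
      ring
  have hcomp : ∀ (k : ℕ), k < N → ∀ p : ℂ[X], p.natDegree ≤ k → p.eval 0 = 1 →
      ((aeval A p) *ᵥ b) 0 = 1 := by
    intro k hk p hdeg hev
    rw [aeval_eq_sum_range, sum_mulVec_aux]
    have key : ∀ i ∈ Finset.range (p.natDegree + 1),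
        ((p.coeff i • A ^ i) *ᵥ b) 0 = if i = 0 then p.coeff 0 else 0 := by
      intro i hi
      rw [Matrix.smul_mulVec]
      have hiN : i < N :=
        lt_of_le_of_lt ((Nat.lt_succ_iff.mp (Finset.mem_range.mp hi)).trans hdeg) hk
      rw [Pi.smul_apply, hpow i]
      by_cases h : i = 0
      · subst h; rw [Nat.cast_zero, Pi.single_eq_same]; simp
      · have hne : (i : Fin N) ≠ 0 := by
          simp only [Ne, Fin.natCast_eq_zero]
          intro hdvd
          exact absurd (Nat.eq_zero_of_dvd_of_lt hdvd hiN) h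
        simp [Pi.single_apply, Ne.symm hne, h]
    rw [Finset.sum_apply, Finset.sum_congr rfl key,
      Finset.sum_ite_eq' (Finset.range (p.natDegree + 1)) 0]
    simp [Polynomial.coeff_zero_eq_eval_zero, hev]
  have hlb : ∀ (k : ℕ), k < N → ∀ p : ℂ[X], p.natDegree ≤ k → p.eval 0 = 1 →
      1 ≤ cenorm ((aeval A p) *ᵥ b) := by
    intro k hk p hdeg hev
    have h0 := hcomp k hk p hdeg hev
    rw [cenorm]
    calc (1 : ℝ) = Real.sqrt (‖((aeval A p) *ᵥ b) 0‖ ^ 2) := by rw [h0]; simp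
      _ ≤ _ := by
            apply Real.sqrt_le_sqrt
            exact Finset.single_le_sum
              (f := fun i => ‖((aeval A p) *ᵥ b) i‖ ^ 2)
              (fun i _ => sq_nonneg _) (Finset.mem_univ (0 : Fin N))
  have hmem : ∀ k : ℕ, (1 : ℝ) ∈ {t | ∃ p : Polynomial ℂ, p.natDegree ≤ k ∧ p.eval 0 = 1 ∧
      t = cenorm ((aeval A p) *ᵥ b)} := by
    intro k
    exact ⟨1, by simp, by simp, by rw [_root_.map_one, Matrix.one_mulVec, hbnorm]⟩
  refine ⟨A, b, ?_, hbnorm, ?_⟩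
  · ext i j
    simp only [Matrix.mul_apply, Matrix.conjTranspose_apply, hA, Matrix.of_apply]
    rw [Finset.sum_eq_single (i + 1)]
    · by_cases h : i = j
      · simp [h, Matrix.one_apply]
      · have hne : j + 1 ≠ i + 1 := fun hc => h (add_right_cancel hc).symm
        simp [h, Ne.symm hne, Matrix.one_apply]
    · intro c _ hc
      simp [hc]
    · simp
  · intro k hk
    apply le_antisymm
    · exact csInf_le ⟨1, fun t ⟨p, hd, he, ht⟩ => ht ▸ hlb k hk p hd he⟩ (hmem k)
    · exact le_csInf ⟨1, hmem k⟩ (fun t ⟨p, hd, he, ht⟩ => ht ▸ hlb k hk p hd he)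
end

section
/- (Murphy–Golub–Wathen) Let A ∈ ℝ^{n×n} be nonsingular and B ∈ ℝ^{m×n} be such that the Schur complement S = BA⁻¹Bᵀ is nonsingular. Let 𝒜 be the (n+m)×(n+m) block matrix [[A, Bᵀ],[B, 0]] and let P be the block diagonal matrix [[A, 0],[0, S]]. Then T = P⁻¹𝒜 satisfies (T − I)(T² − T − I) = 0, equivalently T³ − 2T² + I = 0; in particular the minimal polynomial of T divides (z − 1)(z² − z − 1), so T has at most the three distinct eigenvalues 1, (1+√5)/2, and (1−√5)/2. -/
open Matrix Polynomial

lemma myFromBlocks_sub {n m : ℕ} (a a' : Matrix (Fin n) (Fin n) ℝ)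
    (b b' : Matrix (Fin n) (Fin m) ℝ) (c c' : Matrix (Fin m) (Fin n) ℝ)
    (d d' : Matrix (Fin m) (Fin m) ℝ) :
    Matrix.fromBlocks a b c d - Matrix.fromBlocks a' b' c' d' =
      Matrix.fromBlocks (a - a') (b - b') (c - c') (d - d') := by
  ext (i | i) (j | j) <;> simp [Matrix.fromBlocks]

theorem stmt_16 {n m : ℕ} (A : Matrix (Fin n) (Fin n) ℝ) (hA : IsUnit A.det)
    (B : Matrix (Fin m) (Fin n) ℝ)
    (S : Matrix (Fin m) (Fin m) ℝ) (hS : S = B * A⁻¹ * Bᵀ) (hSdet : IsUnit S.det) :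
    ∀ T : Matrix (Fin n ⊕ Fin m) (Fin n ⊕ Fin m) ℝ,
      T = (Matrix.fromBlocks A 0 0 S)⁻¹ * Matrix.fromBlocks A Bᵀ B 0 →
      (T - 1) * (T ^ 2 - T - 1) = 0 ∧
      T ^ 3 - 2 * T ^ 2 + 1 = 0 ∧
      minpoly ℝ T ∣ (Polynomial.X - 1) * (Polynomial.X ^ 2 - Polynomial.X - 1) ∧
      spectrum ℝ T ⊆ {1, (1 + Real.sqrt 5) / 2, (1 - Real.sqrt 5) / 2} := by
  intro T hT
  have hPinv : (Matrix.fromBlocks A 0 0 S)⁻¹ = Matrix.fromBlocks A⁻¹ 0 0 S⁻¹ := by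
    apply Matrix.inv_eq_right_inv
    rw [Matrix.fromBlocks_multiply]
    simp [Matrix.mul_nonsing_inv _ hA, Matrix.mul_nonsing_inv _ hSdet,
      Matrix.fromBlocks_one]
  set U := A⁻¹ * Bᵀ with hU
  set V := S⁻¹ * B with hV
  have hTblocks : T = Matrix.fromBlocks 1 U V 0 := by
    rw [hT, hPinv, Matrix.fromBlocks_multiply]
    simp [Matrix.nonsing_inv_mul _ hA, hU, hV, Matrix.mul_assoc]
  have hVU : V * U = 1 := by
    rw [hV, hU, Matrix.mul_assoc S⁻¹ B, ← Matrix.mul_assoc B, ← hS,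
      Matrix.nonsing_inv_mul _ hSdet]
  have key : (T - 1) * (T ^ 2 - T - 1) = 0 := by
    have h2 : T ^ 2 = Matrix.fromBlocks (1 + U * V) U V 1 := by
      rw [pow_two, hTblocks, Matrix.fromBlocks_multiply]
      simp [hVU]
    rw [h2, hTblocks]
    have h1 : (1 : Matrix (Fin n ⊕ Fin m) (Fin n ⊕ Fin m) ℝ) = Matrix.fromBlocks 1 0 0 1 :=
      (Matrix.fromBlocks_one).symm
    rw [h1, myFromBlocks_sub, myFromBlocks_sub, myFromBlocks_sub,
      Matrix.fromBlocks_multiply]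
    have e1 : (1 : Matrix (Fin n) (Fin n) ℝ) + U * V - 1 - 1 = U * V - 1 := by abel
    have e2 : U * (V * (U * V - 1)) = 0 := by
      rw [Matrix.mul_sub, ← Matrix.mul_assoc, hVU, Matrix.one_mul, Matrix.mul_one, sub_self,
        Matrix.mul_zero]
    have e3 : V * (U * V - 1) = 0 := by
      rw [Matrix.mul_sub, ← Matrix.mul_assoc, hVU, Matrix.one_mul, Matrix.mul_one, sub_self]
    simp only [sub_self, sub_zero, zero_sub, Matrix.zero_mul, Matrix.mul_zero,
      Matrix.mul_one, Matrix.one_mul, add_zero, zero_add, Matrix.neg_mul, Matrix.mul_neg, e1,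
      Matrix.mul_assoc, e2, e3]
    simp
  have keyP : (aeval T) (((Polynomial.X - 1) * (Polynomial.X ^ 2 - Polynomial.X - 1) : ℝ[X])) = 0 := by
    rw [_root_.map_mul, map_sub, map_sub, map_sub, map_pow, _root_.map_one, aeval_X]
    exact key
  refine ⟨key, ?_, minpoly.dvd _ _ keyP, ?_⟩
  · have : T ^ 3 - 2 * T ^ 2 + 1 = (T - 1) * (T ^ 2 - T - 1) := by noncomm_ring
    rw [this, key]
  · intro z hz
    have hmem := spectrum.subset_polynomial_aeval T
      ((Polynomial.X - 1) * (Polynomial.X ^ 2 - Polynomial.X - 1) : ℝ[X]) ⟨z, hz, rfl⟩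
    rw [keyP] at hmem
    have hz0 : (z - 1) * (z ^ 2 - z - 1) = 0 := by
      by_contra h
      have hu : IsUnit (algebraMap ℝ (Matrix (Fin n ⊕ Fin m) (Fin n ⊕ Fin m) ℝ)
          ((z - 1) * (z ^ 2 - z - 1)) - 0) := by
        rw [sub_zero]
        exact (isUnit_iff_ne_zero.mpr h).map _
      exact (spectrum.mem_iff.mp (by simpa using hmem)) hu
    simp only [Set.mem_insert_iff, Set.mem_singleton_iff]
    rcases mul_eq_zero.mp hz0 with h | h
    · left; linarith [sub_eq_zero.mp h]
    · have h5 : (2 * z - 1) ^ 2 = Real.sqrt 5 ^ 2 := by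
        rw [Real.sq_sqrt (by norm_num : (0:ℝ) ≤ 5)]; nlinarith
      rcases sq_eq_sq_iff_eq_or_eq_neg.mp h5 with h' | h'
      · right; left; linarith
      · right; right; linarith
end
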